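/- arXiv:2411.13985 — 7 statements merged into one kernel-verified Lean document; each statement's English description precedes it below -/
import Mathlib

section
/- Every hypergraph of rank at most 2 has a strict segment representation. -/
set_option maxRecDepth 8000

abbrev Pt : Type := ℝ × ℝ

def IsLine (L : Set Pt) : Prop :=
  ∃ a b : Pt, a ≠ b ∧ L = (affineSpan ℝ {a, b} : Set Pt)

def IsSegment (S : Set Pt) : Prop :=
  ∃ a b : Pt, a ≠ b ∧ S = segment ℝ a b

structure FinHypergraph (ι : Type) where
  V : Finset ι
  E : Finset (Finset ι)
  edge_nonempty : ∀ e ∈ E, e.Nonempty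
  edge_subset : ∀ e ∈ E, e ⊆ V

structure LineRep {ι : Type} (H : FinHypergraph ι) where
  α : ι → Pt
  β : Finset ι → Set Pt
  α_inj : Set.InjOn α ↑H.V
  β_inj : Set.InjOn β ↑H.E
  β_isLine : ∀ e ∈ H.E, IsLine (β e)
  incidence : ∀ v ∈ H.V, ∀ e ∈ H.E, (v ∈ e ↔ α v ∈ β e)

structure SegmentRep {ι : Type} (H : FinHypergraph ι) where
  α : ι → Pt
  β : Finset ι → Set Pt
  α_inj : Set.InjOn α ↑H.V
  β_inj : Set.InjOn β ↑H.E
  β_isSegment : ∀ e ∈ H.E, IsSegment (β e)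
  incidence : ∀ v ∈ H.V, ∀ e ∈ H.E, (v ∈ e ↔ α v ∈ β e)

def SegmentRep.Strict {ι : Type} {H : FinHypergraph ι} (R : SegmentRep H) : Prop :=
  ∀ e ∈ H.E, ∀ e' ∈ H.E, e ≠ e' → (R.β e ∩ R.β e').Subsingleton

def LineRep.CrossingFree {ι : Type} {H : FinHypergraph ι} (R : LineRep H) : Prop :=
  ∀ e ∈ H.E, ∀ e' ∈ H.E, ((R.β e ∩ R.β e').Nonempty ↔ ∃ v, v ∈ e ∧ v ∈ e')

def SegmentRep.CrossingFree {ι : Type} {H : FinHypergraph ι} (R : SegmentRep H) : Prop :=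
  ∀ e ∈ H.E, ∀ e' ∈ H.E, ((R.β e ∩ R.β e').Nonempty ↔ ∃ v, v ∈ e ∧ v ∈ e')

noncomputable section
namespace Stmt6A

def P (x : ℝ) : Pt := (x, x^2)

def vseg (x : ℝ) : Set Pt := segment ℝ (x, x^2) ((x, x^2 + 1) : Pt)

lemma seg_coords {p q z : Pt} (h : z ∈ segment ℝ p q) :
    ∃ u v : ℝ, 0 ≤ u ∧ 0 ≤ v ∧ u + v = 1 ∧ z.1 = u * p.1 + v * q.1 ∧ z.2 = u * p.2 + v * q.2 := by
  obtain ⟨u, v, hu, hv, huv, he⟩ := h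
  refine ⟨u, v, hu, hv, huv, ?_, ?_⟩ <;>
  · rw [← he]; simp [Prod.fst_add, Prod.snd_add]

lemma vseg_fst {x : ℝ} {z : Pt} (h : z ∈ vseg x) : z.1 = x := by
  obtain ⟨u, v, hu, hv, huv, h1, h2⟩ := seg_coords h
  simp at h1
  linear_combination h1 + x * huv

lemma chord_snd {a b : ℝ} {z : Pt} (h : z ∈ segment ℝ (P a) (P b)) :
    z.2 = (a + b) * z.1 - a * b := by
  obtain ⟨u, v, hu, hv, huv, h1, h2⟩ := seg_coords h
  simp [P] at h1 h2
  linear_combination h2 - (a+b) * h1 - a*b*huv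

lemma chord_parab {a b c : ℝ} (h : P c ∈ segment ℝ (P a) (P b)) : c = a ∨ c = b := by
  have := chord_snd h
  simp [P] at this
  have h0 : (c - a) * (c - b) = 0 := by nlinarith
  rcases mul_eq_zero.mp h0 with h | h
  · left; linarith
  · right; linarith

lemma roots {a b c d : ℝ} (hs : a + b = c + d) (hp : a * b = c * d) :
    (a = c ∧ b = d) ∨ (a = d ∧ b = c) := by
  have h : (a - c) * (a - d) = 0 := by linear_combination a*hs - hp
  rcases mul_eq_zero.mp h with h | h
  · left; constructor <;> linarith
  · right; constructor <;> linarith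

variable {ι : Type}

open Classical in
noncomputable def tmap (V : Finset ι) (v : ι) : ℝ :=
  if h : v ∈ V then ((V.equivFin ⟨v, h⟩ : Fin V.card) : ℝ) else 0

lemma tmap_injOn (V : Finset ι) : Set.InjOn (tmap V) ↑V := by
  intro v hv w hw hvw
  simp only [Finset.mem_coe] at hv hw
  rw [tmap, tmap, dif_pos hv, dif_pos hw] at hvw
  have h1 : (V.equivFin ⟨v, hv⟩) = V.equivFin ⟨w, hw⟩ := by
    apply Fin.ext; exact_mod_cast hvw
  have h2 := V.equivFin.injective h1
  simpa using h2

open Classical in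
noncomputable def bmap (V : Finset ι) (e : Finset ι) : Set Pt :=
  if h1 : e.card = 1 then vseg (tmap V (Finset.card_eq_one.mp h1).choose)
  else if h2 : e.card = 2 then
    segment ℝ (P (tmap V (Finset.card_eq_two.mp h2).choose))
      (P (tmap V (Finset.card_eq_two.mp h2).choose_spec.choose))
  else vseg 0

end Stmt6A
end

open Stmt6A in
theorem stmt6 {ι : Type} (H : FinHypergraph ι) (hrank : ∀ e ∈ H.E, e.card ≤ 2) :
    ∃ R : SegmentRep H, R.Strict := by
  classical
  set t := tmap H.V with htdef
  have tinj := tmap_injOn H.V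
  have hcase : ∀ e ∈ H.E,
      (∃ a, a ∈ H.V ∧ e = {a} ∧ bmap H.V e = vseg (t a)) ∨
      (∃ a b, a ∈ H.V ∧ b ∈ H.V ∧ a ≠ b ∧ e = {a, b} ∧
        bmap H.V e = segment ℝ (P (t a)) (P (t b))) := by
    intro e he
    have hne := H.edge_nonempty e he
    have hle := hrank e he
    have hpos : 0 < e.card := Finset.card_pos.mpr hne
    have hcard : e.card = 1 ∨ e.card = 2 := by omega
    rcases hcard with h1 | h2
    · left
      have hspec := (Finset.card_eq_one.mp h1).choose_spec
      refine ⟨_, ?_, hspec, ?_⟩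
      · have hm := Finset.mem_singleton_self (Finset.card_eq_one.mp h1).choose
        rw [← hspec] at hm
        exact H.edge_subset e he hm
      · rw [bmap, dif_pos h1]
    · right
      have hspec := (Finset.card_eq_two.mp h2).choose_spec.choose_spec
      refine ⟨_, _, ?_, ?_, hspec.1, hspec.2, ?_⟩
      · have hm : (Finset.card_eq_two.mp h2).choose ∈
            ({(Finset.card_eq_two.mp h2).choose,
              (Finset.card_eq_two.mp h2).choose_spec.choose} : Finset ι) := by simp
        rw [← hspec.2] at hm
        exact H.edge_subset e he hm
      · have hm : (Finset.card_eq_two.mp h2).choose_spec.choose ∈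
            ({(Finset.card_eq_two.mp h2).choose,
              (Finset.card_eq_two.mp h2).choose_spec.choose} : Finset ι) := by simp
        rw [← hspec.2] at hm
        exact H.edge_subset e he hm
      · rw [bmap, dif_neg (by omega), dif_pos h2]
  have hstrict : ∀ e ∈ H.E, ∀ e' ∈ H.E, e ≠ e' →
      ((bmap H.V e) ∩ (bmap H.V e')).Subsingleton := by
    intro e he e' he' hne
    rcases hcase e he with ⟨a, haV, hea, hbe⟩ | ⟨a, b, haV, hbV, hab, hea, hbe⟩ <;>
      rcases hcase e' he' with ⟨c, hcV, hec, hbe'⟩ | ⟨c, d, hcV, hdV, hcd, hec, hbe'⟩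
    · -- singleton / singleton
      have hac : a ≠ c := by rintro rfl; exact hne (hea.trans hec.symm)
      intro p hp _ _
      exfalso
      rw [hbe, hbe'] at hp
      exact hac (tinj haV hcV ((vseg_fst hp.1).symm.trans (vseg_fst hp.2)))
    · -- singleton / pair
      intro p hp q hq
      rw [hbe, hbe'] at hp hq
      have h1 : p.1 = q.1 := (vseg_fst hp.1).trans (vseg_fst hq.1).symm
      have h2 : p.2 = q.2 := by rw [chord_snd hp.2, chord_snd hq.2, h1]
      exact Prod.ext h1 h2
    · -- pair / singleton
      intro p hp q hq
      rw [hbe, hbe'] at hp hq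
      have h1 : p.1 = q.1 := (vseg_fst hp.2).trans (vseg_fst hq.2).symm
      have h2 : p.2 = q.2 := by rw [chord_snd hp.1, chord_snd hq.1, h1]
      exact Prod.ext h1 h2
    · -- pair / pair
      have hkey : ¬(t a + t b = t c + t d ∧ t a * t b = t c * t d) := by
        rintro ⟨hs, hp⟩
        rcases roots hs hp with ⟨e1, e2⟩ | ⟨e1, e2⟩
        · exact hne (by rw [hea, hec, tinj haV hcV e1, tinj hbV hdV e2])
        · exact hne (by rw [hea, hec, tinj haV hdV e1, tinj hbV hcV e2, Finset.pair_comm])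
      intro p hp q hq
      rw [hbe, hbe'] at hp hq
      have hp1 := chord_snd hp.1
      have hp2 := chord_snd hp.2
      have hq1 := chord_snd hq.1
      have hq2 := chord_snd hq.2
      by_cases hS : t a + t b = t c + t d
      · exfalso
        apply hkey
        refine ⟨hS, ?_⟩
        linear_combination hp1 - hp2 + p.1 * hS
      · have h0 : (t a + t b - (t c + t d)) * (p.1 - q.1) = 0 := by
          linear_combination hp2 - hp1 - hq2 + hq1
        have h1 : p.1 = q.1 := by
          rcases mul_eq_zero.mp h0 with h | h
          · exact absurd (by linarith) hS
          · linarith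
        have h2 : p.2 = q.2 := by rw [hp1, hq1, h1]
        exact Prod.ext h1 h2
  refine ⟨⟨fun v => P (t v), bmap H.V, ?_, ?_, ?_, ?_⟩, ?_⟩
  · -- α_inj
    intro v hv w hw h
    exact tinj hv hw (congrArg Prod.fst h)
  · -- β_inj
    intro e he e' he' heq
    by_contra hne
    have hs := hstrict e he e' he' hne
    rw [heq, Set.inter_self] at hs
    rcases hcase e' he' with ⟨a, _, _, hbe'⟩ | ⟨a, b, haV, hbV, hab, _, hbe'⟩
    · rw [hbe'] at hs
      have habs := hs (left_mem_segment ℝ _ _) (right_mem_segment ℝ _ _)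
      simp [Prod.ext_iff] at habs
    · rw [hbe'] at hs
      have habs := hs (left_mem_segment ℝ _ _) (right_mem_segment ℝ _ _)
      exact hab (tinj haV hbV (congrArg Prod.fst habs))
  · -- β_isSegment
    intro e he
    rcases hcase e he with ⟨a, _, _, hbe⟩ | ⟨a, b, haV, hbV, hab, _, hbe⟩
    · exact ⟨_, _, by simp [Prod.ext_iff], hbe⟩
    · exact ⟨_, _, fun h => hab (tinj haV hbV (congrArg Prod.fst h)), hbe⟩
  · -- incidence
    intro v hv e he
    rcases hcase e he with ⟨a, haV, hea, hbe⟩ | ⟨a, b, haV, hbV, hab, hea, hbe⟩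
    · rw [hbe, hea]
      constructor
      · intro hve
        have hva : v = a := Finset.mem_singleton.mp hve
        subst hva
        exact left_mem_segment ℝ _ _
      · intro hmem
        have := vseg_fst hmem
        exact Finset.mem_singleton.mpr (tinj hv haV this)
    · rw [hbe, hea]
      constructor
      · intro hve
        rcases Finset.mem_insert.mp hve with h | h
        · subst h; exact left_mem_segment ℝ _ _
        · have : v = b := Finset.mem_singleton.mp h
          subst this; exact right_mem_segment ℝ _ _
      · intro hmem
        rcases chord_parab hmem with h | h
        · exact Finset.mem_insert.mpr (Or.inl (tinj hv haV h))
        · exact Finset.mem_insert.mpr (Or.inr (Finset.mem_singleton.mpr (tinj hv hbV h)))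
  · -- Strict
    intro e he e' he' hne
    exact hstrict e he e' he' hne
end

section
/- Every linear hypergraph in which every vertex has degree at most 2 has a strict segment representation. -/
set_option maxRecDepth 8000
set_option linter.unusedSectionVars false

namespace Seg7
variable {ι : Type} [DecidableEq ι]

noncomputable def te (H : FinHypergraph ι) (e : Finset ι) : ℝ := (H.E.toList.idxOf e : ℝ)
def sv (H : FinHypergraph ι) (v : ι) : Finset (Finset ι) := H.E.filter (fun e => v ∈ e)
noncomputable def NN (H : FinHypergraph ι) : ℝ := (H.V.card : ℝ) + (H.E.card : ℝ) + 1

lemma NN_pos (H : FinHypergraph ι) : 0 < NN H := by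
  unfold NN; positivity

lemma te_nonneg (H : FinHypergraph ι) (e : Finset ι) : 0 ≤ te H e := by
  unfold te; positivity

lemma te_lt (H : FinHypergraph ι) {e : Finset ι} (he : e ∈ H.E) : te H e + 1 ≤ (H.E.card : ℝ) := by
  unfold te
  have : H.E.toList.idxOf e < H.E.card := by
    rw [← Finset.length_toList]
    exact List.idxOf_lt_length_iff.2 (Finset.mem_toList.2 he)
  exact_mod_cast this

lemma te_inj (H : FinHypergraph ι) {e e' : Finset ι} (he : e ∈ H.E) (he' : e' ∈ H.E)
    (h : te H e = te H e') : e = e' := by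
  have : H.E.toList.idxOf e = H.E.toList.idxOf e' := Nat.cast_injective h
  exact (List.idxOf_inj (Finset.mem_toList.2 he)).1 this

lemma te_lt_NN (H : FinHypergraph ι) {e : Finset ι} (he : e ∈ H.E) : te H e + 1 ≤ NN H := by
  have := te_lt H he
  unfold NN
  have : (0:ℝ) ≤ (H.V.card : ℝ) := by positivity
  linarith [te_lt H he]

lemma mem_sv (H : FinHypergraph ι) {v : ι} {e : Finset ι} : e ∈ sv H v ↔ e ∈ H.E ∧ v ∈ e := by
  simp [sv]

noncomputable def alph (H : FinHypergraph ι) (v : ι) : Pt :=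
  if (sv H v).card = 2 then ((∑ e ∈ sv H v, te H e)/2, ∏ e ∈ sv H v, te H e)
  else if (sv H v).card = 1 then
    ((H.V.toList.idxOf v : ℝ) + 1/4,
      2 * (∑ e ∈ sv H v, te H e) * ((H.V.toList.idxOf v : ℝ) + 1/4) - (∑ e ∈ sv H v, te H e)^2)
  else (0, (H.V.toList.idxOf v : ℝ) + 1)

def onL (H : FinHypergraph ι) (e : Finset ι) (p : Pt) : Prop :=
  p.2 = 2 * te H e * p.1 - (te H e)^2

noncomputable def bet (H : FinHypergraph ι) (e : Finset ι) : Set Pt :=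
  segment ℝ (-(NN H), 2 * te H e * (-(NN H)) - (te H e)^2)
            ((NN H), 2 * te H e * (NN H) - (te H e)^2)

lemma mem_bet (H : FinHypergraph ι) (e : Finset ι) (p : Pt) :
    p ∈ bet H e ↔ onL H e p ∧ -(NN H) ≤ p.1 ∧ p.1 ≤ NN H := by
  have hN : 0 < NN H := NN_pos H
  constructor
  · rintro ⟨u, w, hu, hw, huw, h⟩
    have h1 : p.1 = u * (-(NN H)) + w * (NN H) := by
      rw [← h]; simp [Prod.smul_def, smul_eq_mul]
    have h2 : p.2 = u * (2 * te H e * (-(NN H)) - (te H e)^2)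
        + w * (2 * te H e * (NN H) - (te H e)^2) := by
      rw [← h]; simp [Prod.smul_def, smul_eq_mul]
    refine ⟨?_, ?_, ?_⟩
    · unfold onL
      rw [h1, h2]
      have : u = 1 - w := by linarith
      subst this; ring
    · rw [h1]; nlinarith
    · rw [h1]; nlinarith
  · rintro ⟨h1, h2, h3⟩
    refine ⟨(NN H - p.1)/(2*NN H), (NN H + p.1)/(2*NN H), ?_, ?_, ?_, ?_⟩
    · apply div_nonneg (by linarith) (by linarith)
    · apply div_nonneg (by linarith) (by linarith)
    · field_simp; ring
    · have hne : (2*NN H) ≠ 0 := by positivity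
      unfold onL at h1
      apply Prod.ext
      · simp [Prod.smul_def, smul_eq_mul]
        field_simp
        ring
      · simp [Prod.smul_def, smul_eq_mul]
        rw [h1]
        field_simp
        ring


lemma quarter_ne (n k k' : ℕ) : (n : ℝ) + 1/4 ≠ ((k : ℝ) + (k' : ℝ))/2 := by
  intro h
  have h4 : ((4*n+1 : ℕ) : ℝ) = ((2*k+2*k' : ℕ) : ℝ) := by push_cast; linarith
  have := Nat.cast_injective h4
  omega

lemma v_inj (H : FinHypergraph ι) {v w : ι} (hv : v ∈ H.V) (hw : w ∈ H.V)
    (h : H.V.toList.idxOf v = H.V.toList.idxOf w) : v = w :=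
  (List.idxOf_inj (Finset.mem_toList.2 hv)).1 h

lemma sv_card_le (H : FinHypergraph ι)
    (hdeg : ∀ v ∈ H.V, (H.E.filter (fun e => v ∈ e)).card ≤ 2)
    {v : ι} (hv : v ∈ H.V) : (sv H v).card ≤ 2 := hdeg v hv

/-- Master lemma: α v lies on the line of e iff e is an edge of v. -/
lemma onL_alph (H : FinHypergraph ι) {v : ι} {e : Finset ι} (hv : v ∈ H.V) (he : e ∈ H.E)
    (hd : (sv H v).card ≤ 2) : onL H e (alph H v) ↔ e ∈ sv H v := by
  rcases Nat.lt_or_ge (sv H v).card 1 with h0 | h1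
  · -- card 0
    have hs : sv H v = ∅ := Finset.card_eq_zero.1 (by omega)
    have : alph H v = (0, (H.V.toList.idxOf v : ℝ) + 1) := by
      simp [alph, hs]
    rw [this, hs]
    simp only [Finset.notMem_empty, iff_false]
    unfold onL
    simp only
    have h1 : 0 ≤ te H e := te_nonneg H e
    have h2 : (0:ℝ) ≤ (H.V.toList.idxOf v : ℝ) := by positivity
    nlinarith
  rcases Nat.lt_or_ge (sv H v).card 2 with h2 | h2
  · -- card 1
    have hc : (sv H v).card = 1 := by omega
    obtain ⟨a, hs⟩ := Finset.card_eq_one.1 hc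
    have ha : a ∈ H.E := ((mem_sv H).1 (hs ▸ Finset.mem_singleton_self a)).1
    have hsum : (∑ e ∈ sv H v, te H e) = te H a := by rw [hs]; simp
    have hα : alph H v = ((H.V.toList.idxOf v : ℝ) + 1/4,
        2 * te H a * ((H.V.toList.idxOf v : ℝ) + 1/4) - (te H a)^2) := by
      simp [alph, hc, hsum]
    rw [hα, hs]
    unfold onL
    simp only [Finset.mem_singleton]
    constructor
    · intro heq
      by_contra hne
      have hte : te H e ≠ te H a := fun h => hne (te_inj H he ha h)
      have : (H.V.toList.idxOf v : ℝ) + 1/4 = (te H e + te H a)/2 := by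
        rcases lt_or_gt_of_ne hte with h | h
        · nlinarith
        · nlinarith
      exact quarter_ne _ (H.E.toList.idxOf e) (H.E.toList.idxOf a) this
    · rintro rfl; rfl
  · -- card 2
    have hc : (sv H v).card = 2 := by omega
    obtain ⟨a, b, hab, hs⟩ := Finset.card_eq_two.1 hc
    have ha : a ∈ H.E := ((mem_sv H).1 (hs ▸ (by simp : a ∈ ({a,b} : Finset (Finset ι))))).1
    have hb : b ∈ H.E := ((mem_sv H).1 (hs ▸ (by simp : b ∈ ({a,b} : Finset (Finset ι))))).1
    have hsum : (∑ e ∈ sv H v, te H e) = te H a + te H b := by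
      rw [hs, Finset.sum_pair hab]
    have hprod : (∏ e ∈ sv H v, te H e) = te H a * te H b := by
      rw [hs, Finset.prod_pair hab]
    have hα : alph H v = ((te H a + te H b)/2, te H a * te H b) := by
      simp [alph, hc, hsum, hprod]
    rw [hα, hs]
    unfold onL
    simp only [Finset.mem_insert, Finset.mem_singleton]
    constructor
    · intro heq
      have : (te H e - te H a) * (te H e - te H b) = 0 := by nlinarith
      rcases mul_eq_zero.1 this with h | h
      · exact Or.inl (te_inj H he ha (by linarith))
      · exact Or.inr (te_inj H he hb (by linarith))
    · rintro (rfl | rfl) <;> ring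

/-- x-coordinate bounds. -/
lemma alph_fst_bounds (H : FinHypergraph ι) {v : ι} (hv : v ∈ H.V) :
    0 ≤ (alph H v).1 ∧ (alph H v).1 ≤ NN H := by
  have hvlt : (H.V.toList.idxOf v : ℝ) + 1 ≤ (H.V.card : ℝ) := by
    have : H.V.toList.idxOf v < H.V.card := by
      rw [← Finset.length_toList]
      exact List.idxOf_lt_length_iff.2 (Finset.mem_toList.2 hv)
    exact_mod_cast this
  have hE : (0:ℝ) ≤ (H.E.card : ℝ) := by positivity
  unfold NN at *
  rcases Nat.decEq (sv H v).card 2 with h2 | h2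
  · rcases Nat.decEq (sv H v).card 1 with h1 | h1
    · have hα : (alph H v).1 = (0:ℝ) := by simp [alph, h1, h2]
      rw [hα]; constructor <;> [rfl; positivity]
    · obtain ⟨a, hs⟩ := Finset.card_eq_one.1 h1
      have hα : (alph H v).1 = (H.V.toList.idxOf v : ℝ) + 1/4 := by simp [alph, h1, h2]
      rw [hα]
      constructor
      · positivity
      · linarith
  · obtain ⟨a, b, hab, hs⟩ := Finset.card_eq_two.1 h2
    have ha : a ∈ H.E := ((mem_sv H).1 (hs ▸ (by simp : a ∈ ({a,b} : Finset (Finset ι))))).1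
    have hb : b ∈ H.E := ((mem_sv H).1 (hs ▸ (by simp : b ∈ ({a,b} : Finset (Finset ι))))).1
    have hsum : (∑ e ∈ sv H v, te H e) = te H a + te H b := by
      rw [hs, Finset.sum_pair hab]
    have hα : (alph H v).1 = (te H a + te H b)/2 := by simp [alph, h2, hsum]
    rw [hα]
    have h1 := te_nonneg H a
    have h2 := te_nonneg H b
    have h3 := te_lt H ha
    have h4 := te_lt H hb
    constructor <;> [positivity; linarith]


lemma alph_inj (H : FinHypergraph ι)
    (hlin : ∀ e ∈ H.E, ∀ e' ∈ H.E, e ≠ e' → (e ∩ e').card ≤ 1)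
    (hdeg : ∀ v ∈ H.V, (H.E.filter (fun e => v ∈ e)).card ≤ 2) :
    Set.InjOn (alph H) ↑H.V := by
  intro v hv w hw h
  simp only [Finset.mem_coe] at hv hw
  by_contra hvw
  have hdv : (sv H v).card ≤ 2 := hdeg v hv
  have hdw : (sv H w).card ≤ 2 := hdeg w hw
  have hsvw : sv H v = sv H w := by
    by_contra hne
    rw [Finset.ext_iff] at hne
    push_neg at hne
    obtain ⟨e, he⟩ := hne
    rcases he with ⟨hev, hew⟩ | ⟨hev, hew⟩
    · have heE : e ∈ H.E := ((mem_sv H).1 hev).1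
      have h1 : onL H e (alph H v) := (onL_alph H hv heE hdv).2 hev
      rw [h] at h1
      exact hew ((onL_alph H hw heE hdw).1 h1)
    · have heE : e ∈ H.E := ((mem_sv H).1 hew).1
      have h1 : onL H e (alph H w) := (onL_alph H hw heE hdw).2 hew
      rw [← h] at h1
      exact hev ((onL_alph H hv heE hdv).1 h1)
  rcases Nat.lt_or_ge (sv H v).card 1 with h0 | h1
  · -- card 0: compare second coords
    have hc : (sv H v).card = 0 := by omega
    have hc' : (sv H w).card = 0 := by rw [← hsvw]; exact hc
    have h1 : alph H v = (0, (H.V.toList.idxOf v : ℝ) + 1) := by simp [alph, hc]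
    have h2 : alph H w = (0, (H.V.toList.idxOf w : ℝ) + 1) := by simp [alph, hc']
    rw [h1, h2, Prod.mk.injEq] at h
    have : H.V.toList.idxOf v = H.V.toList.idxOf w := by
      have := h.2
      exact_mod_cast (by linarith : (H.V.toList.idxOf v : ℝ) = (H.V.toList.idxOf w : ℝ))
    exact hvw (v_inj H hv hw this)
  rcases Nat.lt_or_ge (sv H v).card 2 with h2 | h2
  · -- card 1: compare first coords
    have hc : (sv H v).card = 1 := by omega
    have hc' : (sv H w).card = 1 := by rw [← hsvw]; exact hc
    have h1 : (alph H v).1 = (H.V.toList.idxOf v : ℝ) + 1/4 := by simp [alph, hc]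
    have h2 : (alph H w).1 = (H.V.toList.idxOf w : ℝ) + 1/4 := by simp [alph, hc']
    rw [h] at h1
    rw [h1] at h2
    have : H.V.toList.idxOf v = H.V.toList.idxOf w := by
      exact_mod_cast (by linarith : (H.V.toList.idxOf v : ℝ) = (H.V.toList.idxOf w : ℝ))
    exact hvw (v_inj H hv hw this)
  · -- card 2: v,w both in two common edges, contradicting linearity
    have hc : (sv H v).card = 2 := by omega
    obtain ⟨a, b, hab, hs⟩ := Finset.card_eq_two.1 hc
    have hav : a ∈ sv H v := hs ▸ (by simp)
    have hbv : b ∈ sv H v := hs ▸ (by simp)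
    have haw : a ∈ sv H w := hsvw ▸ hav
    have hbw : b ∈ sv H w := hsvw ▸ hbv
    have haE : a ∈ H.E := ((mem_sv H).1 hav).1
    have hbE : b ∈ H.E := ((mem_sv H).1 hbv).1
    have hcard := hlin a haE b hbE hab
    have hvmem : v ∈ a ∩ b := Finset.mem_inter.2 ⟨((mem_sv H).1 hav).2, ((mem_sv H).1 hbv).2⟩
    have hwmem : w ∈ a ∩ b := Finset.mem_inter.2 ⟨((mem_sv H).1 haw).2, ((mem_sv H).1 hbw).2⟩
    exact hvw (Finset.card_le_one.1 hcard v hvmem w hwmem)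

lemma bet_inj (H : FinHypergraph ι) : Set.InjOn (bet H) ↑H.E := by
  intro e he e' he' h
  simp only [Finset.mem_coe] at he he'
  have hN := NN_pos H
  have hp : ((NN H : ℝ), 2 * te H e' * (NN H) - (te H e')^2) ∈ bet H e' := by
    rw [mem_bet]
    refine ⟨rfl, ?_, ?_⟩ <;> simp <;> linarith
  rw [← h, mem_bet] at hp
  have hq : ((-(NN H) : ℝ), 2 * te H e * (-(NN H)) - (te H e)^2) ∈ bet H e := by
    rw [mem_bet]
    refine ⟨rfl, ?_, ?_⟩ <;> simp <;> linarith
  rw [h, mem_bet] at hq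
  have h1 : 2 * te H e' * NN H - te H e' ^ 2 = 2 * te H e * NN H - te H e ^ 2 := hp.1
  have h2 : 2 * te H e * (-(NN H)) - te H e ^ 2 = 2 * te H e' * (-(NN H)) - te H e' ^ 2 := hq.1
  have : te H e = te H e' := by nlinarith
  exact te_inj H he he' this

lemma bet_isSegment (H : FinHypergraph ι) {e : Finset ι} (he : e ∈ H.E) : IsSegment (bet H e) := by
  refine ⟨_, _, ?_, rfl⟩
  intro hc
  have hN := NN_pos H
  have := congrArg Prod.fst hc
  simp only at this
  linarith

lemma incidence_lem (H : FinHypergraph ι)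
    (hdeg : ∀ v ∈ H.V, (H.E.filter (fun e => v ∈ e)).card ≤ 2)
    {v : ι} (hv : v ∈ H.V) {e : Finset ι} (he : e ∈ H.E) :
    (v ∈ e ↔ alph H v ∈ bet H e) := by
  have hN := NN_pos H
  obtain ⟨hx0, hx1⟩ := alph_fst_bounds H hv
  rw [mem_bet, onL_alph H hv he (hdeg v hv), mem_sv]
  constructor
  · intro hve
    exact ⟨⟨he, hve⟩, by linarith, hx1⟩
  · rintro ⟨⟨_, hve⟩, _⟩
    exact hve

lemma bet_strict (H : FinHypergraph ι) {e e' : Finset ι} (he : e ∈ H.E) (he' : e' ∈ H.E)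
    (hne : e ≠ e') : (bet H e ∩ bet H e').Subsingleton := by
  have hte : te H e ≠ te H e' := fun h => hne (te_inj H he he' h)
  intro p hp q hq
  rw [Set.mem_inter_iff, mem_bet, mem_bet] at hp hq
  have hp1 : p.1 = (te H e + te H e')/2 := by
    have h1 := hp.1.1; have h2 := hp.2.1
    unfold onL at h1 h2
    rcases lt_or_gt_of_ne hte with h | h <;> nlinarith
  have hq1 : q.1 = (te H e + te H e')/2 := by
    have h1 := hq.1.1; have h2 := hq.2.1
    unfold onL at h1 h2
    rcases lt_or_gt_of_ne hte with h | h <;> nlinarith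
  have h12 : p.1 = q.1 := by rw [hp1, hq1]
  have h22 : p.2 = q.2 := by
    have h1 := hp.1.1; have h2 := hq.1.1
    unfold onL at h1 h2
    rw [h1, h2, h12]
  exact Prod.ext h12 h22

end Seg7

theorem stmt7 {ι : Type} [DecidableEq ι] (H : FinHypergraph ι)
    (hlin : ∀ e ∈ H.E, ∀ e' ∈ H.E, e ≠ e' → (e ∩ e').card ≤ 1)
    (hdeg : ∀ v ∈ H.V, (H.E.filter (fun e => v ∈ e)).card ≤ 2) :
    ∃ R : SegmentRep H, R.Strict := by
  exact ⟨⟨Seg7.alph H, Seg7.bet H, Seg7.alph_inj H hlin hdeg, Seg7.bet_inj H,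
    fun e he => Seg7.bet_isSegment H he,
    fun v hv e he => Seg7.incidence_lem H hdeg hv he⟩,
    fun e he e' he' hne => Seg7.bet_strict H he he' hne⟩
end

section
/- Let a, b1, b2, c1, c2, d be pairwise distinct vertices. The rigid parallel 2-path, i.e. the hypergraph with vertex set {a,b1,b2,c1,c2,d} and hyperedges {a,b1,c1}, {b1,c1,d}, {a,b2,c2}, {b2,c2,d}, has no segment representation. -/
set_option maxRecDepth 8000

/-- Auxiliary: the parametrization `t ↦ t • v +ᵥ A` maps betweenness on `ℝ`
to segment membership in the plane. -/
lemma segParamMem (A v : Pt) (t1 t2 t3 : ℝ) (h : t2 ∈ Set.uIcc t1 t3) :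
    (t2 • v +ᵥ A) ∈ segment ℝ (t1 • v +ᵥ A) (t3 • v +ᵥ A) := by
  have hw : Wbtw ℝ t1 t2 t3 := mem_segment_iff_wbtw.mp (by rwa [segment_eq_uIcc])
  have h2 := hw.map (AffineMap.lineMap (A : Pt) (v +ᵥ A))
  have := h2.mem_segment
  simpa [AffineMap.lineMap_apply, vsub_eq_sub, vadd_eq_add] using this

/-- Auxiliary: trichotomy for betweenness of three reals. -/
lemma uIcc_trichotomy (t t4 : ℝ) : t ∈ Set.uIcc (0 : ℝ) t4 ∨ (0 : ℝ) ∈ Set.uIcc t t4 ∨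
    t4 ∈ Set.uIcc (0 : ℝ) t := by
  simp only [Set.mem_uIcc]
  rcases le_total 0 t with h | h <;> rcases le_total t t4 with h' | h' <;>
    rcases le_total 0 t4 with h'' | h'' <;> tauto

/-- Auxiliary: three points of a segment are collinear. -/
lemma segTripleCollinear {S : Set Pt} (hS : IsSegment S) {p q r : Pt}
    (hp : p ∈ S) (hq : q ∈ S) (hr : r ∈ S) : Collinear ℝ ({p, q, r} : Set Pt) := by
  obtain ⟨x, y, -, rfl⟩ := hS
  exact collinear_triple_of_mem_affineSpan_pair
    (mem_segment_iff_wbtw.mp hp).mem_affineSpan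
    (mem_segment_iff_wbtw.mp hq).mem_affineSpan
    (mem_segment_iff_wbtw.mp hr).mem_affineSpan

theorem stmt9 {ι : Type} [DecidableEq ι] (a b₁ b₂ c₁ c₂ d : ι)
    (hdist : [a, b₁, b₂, c₁, c₂, d].Pairwise (· ≠ ·))
    (H : FinHypergraph ι) (hV : H.V = {a, b₁, b₂, c₁, c₂, d})
    (hE : H.E = {({a, b₁, c₁} : Finset ι), {b₁, c₁, d}, {a, b₂, c₂}, {b₂, c₂, d}}) :
    ¬ Nonempty (SegmentRep H) := by
  rintro ⟨R⟩
  simp only [List.pairwise_cons, List.mem_cons, List.not_mem_nil, List.mem_singleton,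
    forall_eq_or_imp, forall_eq, List.Pairwise.nil, IsEmpty.forall_iff, and_true] at hdist
  obtain ⟨⟨hab1, hab2, hac1, hac2, had⟩, ⟨hb1b2, hb1c1, hb1c2, hb1d⟩,
    ⟨hb2c1, hb2c2, hb2d⟩, ⟨hc1c2, hc1d⟩, hc2d⟩ := hdist
  replace had : a ≠ d := had.1
  replace hb1d : b₁ ≠ d := hb1d.1
  replace hb2d : b₂ ≠ d := hb2d.1
  replace hc1d : c₁ ≠ d := hc1d.1
  replace hc2d : c₂ ≠ d := hc2d.1.1
  -- vertices
  have hva : a ∈ H.V := by rw [hV]; simp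
  have hvb1 : b₁ ∈ H.V := by rw [hV]; simp
  have hvb2 : b₂ ∈ H.V := by rw [hV]; simp
  have hvc1 : c₁ ∈ H.V := by rw [hV]; simp
  have hvc2 : c₂ ∈ H.V := by rw [hV]; simp
  have hvd : d ∈ H.V := by rw [hV]; simp
  -- edges
  have he1 : ({a, b₁, c₁} : Finset ι) ∈ H.E := by rw [hE]; simp
  have he2 : ({b₁, c₁, d} : Finset ι) ∈ H.E := by rw [hE]; simp
  have he3 : ({a, b₂, c₂} : Finset ι) ∈ H.E := by rw [hE]; simp
  have he4 : ({b₂, c₂, d} : Finset ι) ∈ H.E := by rw [hE]; simp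
  set A := R.α a with hA
  set B1 := R.α b₁ with hB1
  set B2 := R.α b₂ with hB2
  set C1 := R.α c₁ with hC1
  set C2 := R.α c₂ with hC2
  set D := R.α d with hD
  set S1 := R.β {a, b₁, c₁} with hS1
  set S2 := R.β {b₁, c₁, d} with hS2
  set S3 := R.β {a, b₂, c₂} with hS3
  set S4 := R.β {b₂, c₂, d} with hS4
  -- memberships
  have m1a : A ∈ S1 := (R.incidence a hva _ he1).mp (by simp)
  have m1b1 : B1 ∈ S1 := (R.incidence b₁ hvb1 _ he1).mp (by simp)
  have m1c1 : C1 ∈ S1 := (R.incidence c₁ hvc1 _ he1).mp (by simp)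
  have m2b1 : B1 ∈ S2 := (R.incidence b₁ hvb1 _ he2).mp (by simp)
  have m2c1 : C1 ∈ S2 := (R.incidence c₁ hvc1 _ he2).mp (by simp)
  have m2d : D ∈ S2 := (R.incidence d hvd _ he2).mp (by simp)
  have m3a : A ∈ S3 := (R.incidence a hva _ he3).mp (by simp)
  have m3b2 : B2 ∈ S3 := (R.incidence b₂ hvb2 _ he3).mp (by simp)
  have m3c2 : C2 ∈ S3 := (R.incidence c₂ hvc2 _ he3).mp (by simp)
  have m4b2 : B2 ∈ S4 := (R.incidence b₂ hvb2 _ he4).mp (by simp)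
  have m4c2 : C2 ∈ S4 := (R.incidence c₂ hvc2 _ he4).mp (by simp)
  have m4d : D ∈ S4 := (R.incidence d hvd _ he4).mp (by simp)
  -- non-memberships
  have n1d : D ∉ S1 := fun h =>
    absurd ((R.incidence d hvd _ he1).mpr h) (by simp [had.symm, hb1d.symm, hc1d.symm])
  have n2a : A ∉ S2 := fun h =>
    absurd ((R.incidence a hva _ he2).mpr h) (by simp [hab1, hac1, had])
  have n3d : D ∉ S3 := fun h =>
    absurd ((R.incidence d hvd _ he3).mpr h) (by simp [had.symm, hb2d.symm, hc2d.symm])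
  have n4a : A ∉ S4 := fun h =>
    absurd ((R.incidence a hva _ he4).mpr h) (by simp [hab2, hac2, had])
  have n3b1 : B1 ∉ S3 := fun h =>
    absurd ((R.incidence b₁ hvb1 _ he3).mpr h) (by simp [hab1.symm, hb1b2, hb1c2])
  have n4b1 : B1 ∉ S4 := fun h =>
    absurd ((R.incidence b₁ hvb1 _ he4).mpr h) (by simp [hb1b2, hb1c2, hb1d])
  -- distinct points
  have hAD : A ≠ D := fun h => had (R.α_inj hva hvd h)
  have hB1C1 : B1 ≠ C1 := fun h => hb1c1 (R.α_inj hvb1 hvc1 h)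
  have hB2C2 : B2 ≠ C2 := fun h => hb2c2 (R.α_inj hvb2 hvc2 h)
  -- collinearity
  have col1 := segTripleCollinear (R.β_isSegment _ he1) m1a m1b1 m1c1
  have col2 := segTripleCollinear (R.β_isSegment _ he2) m2b1 m2c1 m2d
  have col3 := segTripleCollinear (R.β_isSegment _ he3) m3a m3b2 m3c2
  have col4 := segTripleCollinear (R.β_isSegment _ he4) m4b2 m4c2 m4d
  have hA12 : A ∈ line[ℝ, B1, C1] :=
    col1.mem_affineSpan_of_mem_of_ne (by simp) (by simp) (by simp) hB1C1
  have hD12 : D ∈ line[ℝ, B1, C1] :=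
    col2.mem_affineSpan_of_mem_of_ne (by simp) (by simp) (by simp) hB1C1
  have col12 : Collinear ℝ ({A, D, B1, C1} : Set Pt) :=
    collinear_insert_insert_of_mem_affineSpan_pair hA12 hD12
  have hB1AD : B1 ∈ line[ℝ, A, D] :=
    col12.mem_affineSpan_of_mem_of_ne (by simp) (by simp) (by simp) hAD
  have hA34 : A ∈ line[ℝ, B2, C2] :=
    col3.mem_affineSpan_of_mem_of_ne (by simp) (by simp) (by simp) hB2C2
  have hD34 : D ∈ line[ℝ, B2, C2] :=
    col4.mem_affineSpan_of_mem_of_ne (by simp) (by simp) (by simp) hB2C2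
  have col34 : Collinear ℝ ({A, D, B2, C2} : Set Pt) :=
    collinear_insert_insert_of_mem_affineSpan_pair hA34 hD34
  have hB2AD : B2 ∈ line[ℝ, A, D] :=
    col34.mem_affineSpan_of_mem_of_ne (by simp) (by simp) (by simp) hAD
  have col : Collinear ℝ ({B1, B2, A, D} : Set Pt) :=
    collinear_insert_insert_of_mem_affineSpan_pair hB1AD hB2AD
  rw [collinear_iff_of_mem (show A ∈ ({B1, B2, A, D} : Set Pt) by simp)] at col
  obtain ⟨v, hv⟩ := col
  obtain ⟨t1, ht1⟩ := hv B1 (by simp)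
  obtain ⟨t2, ht2⟩ := hv B2 (by simp)
  obtain ⟨t4, ht4⟩ := hv D (by simp)
  -- convexity
  have cvx : ∀ S : Set Pt, IsSegment S → Convex ℝ S := by
    rintro S ⟨x, y, -, rfl⟩; exact convex_segment x y
  have cv1 := cvx _ (R.β_isSegment _ he1)
  have cv2 := cvx _ (R.β_isSegment _ he2)
  have cv3 := cvx _ (R.β_isSegment _ he3)
  have cv4 := cvx _ (R.β_isSegment _ he4)
  -- trichotomy on ℝ
  have hkey : ∀ t : ℝ, t ∈ Set.uIcc (0 : ℝ) t4 ∨ (0 : ℝ) ∈ Set.uIcc t t4 ∨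
      t4 ∈ Set.uIcc (0 : ℝ) t := fun t => uIcc_trichotomy t t4
  -- B1 lies between A and D
  have hb1 : t1 ∈ Set.uIcc (0 : ℝ) t4 := by
    rcases hkey t1 with h | h | h
    · exact h
    · exfalso
      apply n2a
      have hs := segParamMem A v t1 0 t4 h
      rw [zero_smul, zero_vadd, ← ht1, ← ht4] at hs
      exact cv2.segment_subset m2b1 m2d hs
    · exfalso
      apply n1d
      have hs := segParamMem A v 0 t4 t1 h
      rw [zero_smul, zero_vadd, ← ht1, ← ht4] at hs
      exact cv1.segment_subset m1a m1b1 hs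
  -- B2 lies between A and D
  have hb2 : t2 ∈ Set.uIcc (0 : ℝ) t4 := by
    rcases hkey t2 with h | h | h
    · exact h
    · exfalso
      apply n4a
      have hs := segParamMem A v t2 0 t4 h
      rw [zero_smul, zero_vadd, ← ht2, ← ht4] at hs
      exact cv4.segment_subset m4b2 m4d hs
    · exfalso
      apply n3d
      have hs := segParamMem A v 0 t4 t2 h
      rw [zero_smul, zero_vadd, ← ht2, ← ht4] at hs
      exact cv3.segment_subset m3a m3b2 hs
  -- split [A, D] at B2
  have hsplit : t1 ∈ Set.uIcc (0 : ℝ) t2 ∨ t1 ∈ Set.uIcc t2 t4 := by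
    simp only [Set.mem_uIcc] at hb1 hb2 ⊢
    rcases hb1 with ⟨h1, h2⟩ | ⟨h1, h2⟩ <;> rcases hb2 with ⟨h3, h4⟩ | ⟨h3, h4⟩ <;>
      rcases le_total t1 t2 with hc | hc <;>
      first
        | (left; left; constructor <;> linarith)
        | (left; right; constructor <;> linarith)
        | (right; left; constructor <;> linarith)
        | (right; right; constructor <;> linarith)
  rcases hsplit with h | h
  · apply n3b1
    have hs := segParamMem A v 0 t1 t2 h
    rw [zero_smul, zero_vadd, ← ht1, ← ht2] at hs
    exact cv3.segment_subset m3a m3b2 hs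
  · apply n4b1
    have hs := segParamMem A v t2 t1 t4 h
    rw [← ht1, ← ht2, ← ht4] at hs
    exact cv4.segment_subset m4b2 m4d hs
end

section
/- Let t ≥ 3 and let H be the hypergraph with pairwise distinct vertices v1,…,vt and hyperedges e_i = {v_i, v_{i+1}, v_{i+2}} for 1 ≤ i ≤ t−2. In every segment representation (α, β) of H, the points α(v1),…,α(vt) are collinear. -/
set_option maxRecDepth 8000

lemma collinear_span_pair (a b : Pt) :
    Collinear ℝ ((affineSpan ℝ {a, b} : Set Pt)) := by
  have h : Collinear ℝ ({a, b} : Set Pt) := collinear_pair ℝ a b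
  have hvs : vectorSpan ℝ ((affineSpan ℝ {a, b} : Set Pt))
      = vectorSpan ℝ ({a, b} : Set Pt) := by
    rw [← direction_affineSpan, AffineSubspace.affineSpan_coe, direction_affineSpan]
  unfold Collinear at h ⊢
  rw [hvs]
  exact h

lemma collinear_seg (a b : Pt) : Collinear ℝ (segment ℝ a b) := by
  refine (collinear_span_pair a b).subset ?_
  rw [segment_eq_image_lineMap]
  rintro p ⟨c, -, rfl⟩
  exact AffineMap.lineMap_mem_affineSpan_pair c a b

theorem stmt11 {ι : Type} [DecidableEq ι] (t : ℕ) (ht : 3 ≤ t) (v : ℕ → ι)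
    (hv : ∀ i ∈ Finset.Icc 1 t, ∀ j ∈ Finset.Icc 1 t, v i = v j → i = j)
    (H : FinHypergraph ι)
    (hV : H.V = (Finset.Icc 1 t).image v)
    (hE : H.E = (Finset.Icc 1 (t - 2)).image
      (fun i => ({v i, v (i + 1), v (i + 2)} : Finset ι)))
    (R : SegmentRep H) :
    Collinear ℝ {p : Pt | ∃ i, 1 ≤ i ∧ i ≤ t ∧ p = R.α (v i)} := by
  
  set p : ℕ → Pt := fun i => R.α (v i) with hp
  have hvmem : ∀ i, 1 ≤ i → i ≤ t → v i ∈ H.V := by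
    intro i h1 h2
    rw [hV]
    exact Finset.mem_image_of_mem v (Finset.mem_Icc.mpr ⟨h1, h2⟩)
  have hpne : ∀ i j, 1 ≤ i → i ≤ t → 1 ≤ j → j ≤ t → i ≠ j → p i ≠ p j := by
    intro i j h1 h2 h3 h4 hij heq
    exact hij (hv i (Finset.mem_Icc.mpr ⟨h1, h2⟩) j (Finset.mem_Icc.mpr ⟨h3, h4⟩)
      (R.α_inj (hvmem i h1 h2) (hvmem j h3 h4) heq))
  have htriple : ∀ i, 1 ≤ i → i + 2 ≤ t →
      Collinear ℝ ({p i, p (i+1), p (i+2)} : Set Pt) := by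
    intro i h1 h2
    have hiE : ({v i, v (i+1), v (i+2)} : Finset ι) ∈ H.E := by
      rw [hE]
      exact Finset.mem_image_of_mem _ (Finset.mem_Icc.mpr ⟨h1, by omega⟩)
    obtain ⟨a, b, hab, hseg⟩ := R.β_isSegment _ hiE
    have hcs : Collinear ℝ (R.β {v i, v (i+1), v (i+2)}) := hseg ▸ collinear_seg a b
    refine hcs.subset ?_
    intro q hq
    rcases hq with rfl | rfl | rfl
    · exact (R.incidence _ (hvmem i h1 (by omega)) _ hiE).1 (by simp)
    · exact (R.incidence _ (hvmem (i+1) (by omega) (by omega)) _ hiE).1 (by simp)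
    · exact (R.incidence _ (hvmem (i+2) (by omega) (by omega)) _ hiE).1 (by simp)
  have key : ∀ i, 1 ≤ i → i ≤ t → p i ∈ affineSpan ℝ ({p 1, p 2} : Set Pt) := by
    intro i
    induction i using Nat.strong_induction_on with
    | _ i ih =>
      intro h1 h2
      obtain _ | _ | _ | j := i
      · omega
      · exact subset_affineSpan ℝ _ (by simp)
      · exact subset_affineSpan ℝ _ (by simp)
      · have hA := ih (j+1) (by omega) (by omega) (by omega)
        have hB := ih (j+2) (by omega) (by omega) (by omega)
        have htr := htriple (j+1) (by omega) (by omega)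
        have hne := hpne (j+1) (j+2) (by omega) (by omega) (by omega) (by omega) (by omega)
        have hmem : p (j+3) ∈ affineSpan ℝ ({p (j+1), p (j+2)} : Set Pt) :=
          htr.mem_affineSpan_of_mem_of_ne (by simp) (by simp) (by simp) hne
        have hle : affineSpan ℝ ({p (j+1), p (j+2)} : Set Pt) ≤
            affineSpan ℝ ({p 1, p 2} : Set Pt) := by
          rw [affineSpan_le]
          rintro q (rfl | rfl)
          · exact hA
          · exact hB
        exact hle hmem
  refine (collinear_span_pair (p 1) (p 2)).subset ?_
  rintro q ⟨i, h1, h2, rfl⟩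
  exact key i h1 h2
end

section
/- Let H=(V,E) be a linear hypergraph in which every vertex has degree at most 2. Then H admits a crossing-free line representation if and only if for all pairwise distinct hyperedges e1, e2, e3 ∈ E, if e1 ∩ e2 = ∅ and e2 ∩ e3 = ∅ then e1 ∩ e3 = ∅ (i.e., the hyperedge intersection graph of H is a complete multipartite graph). -/
set_option maxRecDepth 8000

theorem mem_span_pair' (a b p : Pt) :
    p ∈ (affineSpan ℝ {a, b} : Set Pt) ↔ ∃ r : ℝ, r • (b - a) + a = p := by
  rw [SetLike.mem_coe]
  have h : p = (p - a) +ᵥ a := by simp [vadd_eq_add]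
  rw [h, vadd_left_mem_affineSpan_pair]
  have hba : (b -ᵥ a) = b - a := rfl
  rw [hba]
  simp only [vadd_eq_add]
  constructor
  · rintro ⟨r, hr⟩; exact ⟨r, by rw [hr]⟩
  · rintro ⟨r, hr⟩; exact ⟨r, add_right_cancel hr⟩

noncomputable section Helpers

def Ln (m c : ℝ) : Set Pt := {p : Pt | p.2 = m * p.1 + c}

theorem mem_Ln {m c : ℝ} {p : Pt} : p ∈ Ln m c ↔ p.2 = m * p.1 + c := Iff.rfl

theorem Ln_isLine (m c : ℝ) : IsLine (Ln m c) := by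
  refine ⟨(0, c), (1, m + c), ?_, ?_⟩
  · intro h
    have := congrArg Prod.fst h
    simp at this
  · ext p
    rw [mem_span_pair']
    constructor
    · intro hp
      refine ⟨p.1, ?_⟩
      have h1 : ((1:ℝ), m + c) - ((0:ℝ), c) = (1, m) := by
        simp [Prod.ext_iff]
      rw [h1]
      have : p.1 • ((1:ℝ), m) + ((0:ℝ), c) = (p.1, p.1 * m + c) := by
        simp [Prod.ext_iff, smul_eq_mul]
      rw [this]
      have hp' : p.2 = m * p.1 + c := hp
      exact Prod.ext (by simp) (by simp [hp']; ring)
    · rintro ⟨r, hr⟩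
      have h1 : ((1:ℝ), m + c) - ((0:ℝ), c) = (1, m) := by simp [Prod.ext_iff]
      rw [h1] at hr
      have h2 : r • ((1:ℝ), m) + ((0:ℝ), c) = (r, r * m + c) := by
        simp [Prod.ext_iff, smul_eq_mul]
      rw [h2] at hr
      have h1' : p.1 = r := by rw [← hr]
      have h2' : p.2 = r * m + c := by rw [← hr]
      show p.2 = m * p.1 + c
      rw [h1', h2']; ring

def iptP (m c m' c' : ℝ) : Pt := ((c' - c) / (m - m'), m * ((c' - c) / (m - m')) + c)

theorem iptP_mem_left (m c m' c' : ℝ) : iptP m c m' c' ∈ Ln m c := rfl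

theorem iptP_mem_right {m m' : ℝ} (h : m ≠ m') (c c' : ℝ) : iptP m c m' c' ∈ Ln m' c' := by
  show m * ((c' - c) / (m - m')) + c = m' * ((c' - c) / (m - m')) + c'
  have hmm : m - m' ≠ 0 := sub_ne_zero.mpr h
  field_simp
  ring

theorem eq_iptP {m c m' c' : ℝ} {p : Pt} (h : m ≠ m')
    (hp : p ∈ Ln m c) (hp' : p ∈ Ln m' c') : p = iptP m c m' c' := by
  have hmm : m - m' ≠ 0 := sub_ne_zero.mpr h
  have hp1 : p.1 = (c' - c) / (m - m') := by
    have h1 : p.2 = m * p.1 + c := hp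
    have h2 : p.2 = m' * p.1 + c' := hp'
    field_simp
    nlinarith [h1, h2]
  have hp2 : p.2 = m * ((c' - c) / (m - m')) + c := by
    rw [← hp1]; exact hp
  exact Prod.ext hp1 hp2

theorem Ln_inj {m c m' c' : ℝ} (h : Ln m c = Ln m' c') : m = m' ∧ c = c' := by
  have h0 : ((0:ℝ), c) ∈ Ln m c := by show c = m * 0 + c; ring
  have h1 : ((1:ℝ), m + c) ∈ Ln m c := by show m + c = m * 1 + c; ring
  rw [h] at h0 h1
  have h0' : c = m' * 0 + c' := h0
  have h1' : m + c = m' * 1 + c' := h1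
  constructor <;> nlinarith [h0', h1']

theorem Ln_parallel_disjoint {m c c' : ℝ} (h : c ≠ c') {p : Pt}
    (hp : p ∈ Ln m c) (hp' : p ∈ Ln m c') : False := by
  have h1 : p.2 = m * p.1 + c := hp
  have h2 : p.2 = m * p.1 + c' := hp'
  exact h (by linarith)

-- forward direction helpers
theorem det_aux {d1 d2 d3 : Pt} (h2 : d2 ≠ 0)
    (h12 : d1.1 * d2.2 - d1.2 * d2.1 = 0) (h23 : d2.1 * d3.2 - d2.2 * d3.1 = 0) :
    d1.1 * d3.2 - d1.2 * d3.1 = 0 := by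
  have h2' : d2.1 ≠ 0 ∨ d2.2 ≠ 0 := by
    by_contra hc
    push_neg at hc
    exact h2 (Prod.ext hc.1 hc.2)
  rcases h2' with h | h
  · have hz : d2.1 * (d1.1 * d3.2 - d1.2 * d3.1) = 0 := by
      linear_combination d3.1 * h12 + d1.1 * h23
    rcases mul_eq_zero.mp hz with h' | h'
    · exact absurd h' h
    · exact h'
  · have hz : d2.2 * (d1.1 * d3.2 - d1.2 * d3.1) = 0 := by
      linear_combination d3.2 * h12 + d1.2 * h23
    rcases mul_eq_zero.mp hz with h' | h'
    · exact absurd h' h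
    · exact h'
theorem lines_meet {a1 b1 a2 b2 : Pt}
    (hD : (b1 - a1).1 * (b2 - a2).2 - (b1 - a1).2 * (b2 - a2).1 ≠ 0) :
    ∃ p : Pt, p ∈ (affineSpan ℝ {a1, b1} : Set Pt) ∧ p ∈ (affineSpan ℝ {a2, b2} : Set Pt) := by
  have hD' : (b1.1 - a1.1) * (b2.2 - a2.2) - (b1.2 - a1.2) * (b2.1 - a2.1) ≠ 0 := hD
  set r : ℝ := ((a2.1 - a1.1) * (b2.2 - a2.2) - (a2.2 - a1.2) * (b2.1 - a2.1)) /
      ((b1.1 - a1.1) * (b2.2 - a2.2) - (b1.2 - a1.2) * (b2.1 - a2.1)) with hr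
  set t : ℝ := ((a2.1 - a1.1) * (b1.2 - a1.2) - (a2.2 - a1.2) * (b1.1 - a1.1)) /
      ((b1.1 - a1.1) * (b2.2 - a2.2) - (b1.2 - a1.2) * (b2.1 - a2.1)) with ht
  refine ⟨r • (b1 - a1) + a1, ?_, ?_⟩
  · rw [mem_span_pair']; exact ⟨r, rfl⟩
  · rw [mem_span_pair']
    refine ⟨t, ?_⟩
    apply Prod.ext
    · show t * (b2.1 - a2.1) + a2.1 = r * (b1.1 - a1.1) + a1.1
      rw [hr, ht]
      field_simp
      ring
    · show t * (b2.2 - a2.2) + a2.2 = r * (b1.2 - a1.2) + a1.2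
      rw [hr, ht]
      field_simp
      ring
theorem span_pair_mem_iff {a b p : Pt} (hp : p ∈ (affineSpan ℝ {a, b} : Set Pt)) (q : Pt) :
    q ∈ (affineSpan ℝ {a, b} : Set Pt) ↔ ∃ t : ℝ, t • (b - a) + p = q := by
  rw [mem_span_pair'] at hp ⊢
  obtain ⟨r, hr⟩ := hp
  constructor
  · rintro ⟨u, hu⟩
    refine ⟨u - r, ?_⟩
    rw [← hu, ← hr]
    module
  · rintro ⟨u, hu⟩
    refine ⟨u + r, ?_⟩
    rw [← hu, ← hr]
    module

theorem lines_eq {a1 b1 a3 b3 p : Pt} (h1 : a1 ≠ b1) (h3 : a3 ≠ b3)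
    (hdet : (b1 - a1).1 * (b3 - a3).2 - (b1 - a1).2 * (b3 - a3).1 = 0)
    (hp1 : p ∈ (affineSpan ℝ {a1, b1} : Set Pt))
    (hp3 : p ∈ (affineSpan ℝ {a3, b3} : Set Pt)) :
    (affineSpan ℝ {a1, b1} : Set Pt) = (affineSpan ℝ {a3, b3} : Set Pt) := by
  have hd1ne : b1 - a1 ≠ 0 := sub_ne_zero.mpr (Ne.symm h1)
  have hd3ne : b3 - a3 ≠ 0 := sub_ne_zero.mpr (Ne.symm h3)
  have hdet' : (b1.1 - a1.1) * (b3.2 - a3.2) - (b1.2 - a1.2) * (b3.1 - a3.1) = 0 := hdet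
  obtain ⟨k, hk, hkne⟩ : ∃ k : ℝ, b3 - a3 = k • (b1 - a1) ∧ k ≠ 0 := by
    have hcase : b1.1 - a1.1 ≠ 0 ∨ b1.2 - a1.2 ≠ 0 := by
      by_contra hc; push_neg at hc
      exact hd1ne (Prod.ext hc.1 hc.2)
    rcases hcase with h | h
    · refine ⟨(b3.1 - a3.1) / (b1.1 - a1.1), Prod.ext ?_ ?_, ?_⟩
      · show b3.1 - a3.1 = (b3.1 - a3.1) / (b1.1 - a1.1) * (b1.1 - a1.1)
        field_simp
      · show b3.2 - a3.2 = (b3.1 - a3.1) / (b1.1 - a1.1) * (b1.2 - a1.2)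
        field_simp
        linear_combination hdet'
      · intro hk0
        apply hd3ne
        have h31 : b3.1 - a3.1 = 0 := by
          rcases div_eq_zero_iff.mp hk0 with h' | h'
          · exact h'
          · exact absurd h' h
        have hz : (b1.1 - a1.1) * (b3.2 - a3.2) = 0 := by
          linear_combination hdet' + (b1.2 - a1.2) * h31
        have h32 : b3.2 - a3.2 = 0 := by
          rcases mul_eq_zero.mp hz with h' | h'
          · exact absurd h' h
          · exact h'
        exact Prod.ext h31 h32
    · refine ⟨(b3.2 - a3.2) / (b1.2 - a1.2), Prod.ext ?_ ?_, ?_⟩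
      · show b3.1 - a3.1 = (b3.2 - a3.2) / (b1.2 - a1.2) * (b1.1 - a1.1)
        field_simp
        linear_combination -hdet'
      · show b3.2 - a3.2 = (b3.2 - a3.2) / (b1.2 - a1.2) * (b1.2 - a1.2)
        field_simp
      · intro hk0
        apply hd3ne
        have h32 : b3.2 - a3.2 = 0 := by
          rcases div_eq_zero_iff.mp hk0 with h' | h'
          · exact h'
          · exact absurd h' h
        have hz : (b1.2 - a1.2) * (b3.1 - a3.1) = 0 := by
          linear_combination -hdet' + (b1.1 - a1.1) * h32
        have h31 : b3.1 - a3.1 = 0 := by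
          rcases mul_eq_zero.mp hz with h' | h'
          · exact absurd h' h
          · exact h'
        exact Prod.ext h31 h32
  ext q
  rw [span_pair_mem_iff hp1, span_pair_mem_iff hp3]
  constructor
  · rintro ⟨t, ht⟩
    refine ⟨t / k, ?_⟩
    rw [hk, smul_smul, div_mul_cancel₀ _ hkne, ht]
  · rintro ⟨t, ht⟩
    refine ⟨t * k, ?_⟩
    rw [hk, smul_smul] at ht
    exact ht

end Helpers
section Constr

variable {ι : Type} [DecidableEq ι]

theorem exists_slopes (E : Finset (Finset ι))
    (hm : ∀ e₁ ∈ E, ∀ e₂ ∈ E, ∀ e₃ ∈ E, e₁ ≠ e₂ → e₁ ≠ e₃ → e₂ ≠ e₃ →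
        e₁ ∩ e₂ = ∅ → e₂ ∩ e₃ = ∅ → e₁ ∩ e₃ = ∅) :
    ∃ s : Finset ι → ℝ, ∀ e ∈ E, ∀ e' ∈ E, (s e = s e' ↔ (e = e' ∨ e ∩ e' = ∅)) := by
  classical
  set l := E.toList with hl
  have htrans : ∀ a ∈ E, ∀ b ∈ E, ∀ c ∈ E, (a = b ∨ a ∩ b = ∅) → (b = c ∨ b ∩ c = ∅) →
      (a = c ∨ a ∩ c = ∅) := by
    intro a ha b hb c hc hab hbc
    by_cases hac : a = c
    · exact Or.inl hac
    rcases hab with rfl | hab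
    · exact hbc
    rcases hbc with rfl | hbc
    · exact Or.inr hab
    by_cases hab' : a = b
    · subst hab'; exact Or.inr hbc
    by_cases hbc' : b = c
    · subst hbc'; exact Or.inr hab
    · exact Or.inr (hm a ha b hb c hc hab' hac hbc' hab hbc)
  have hsymm : ∀ a b : Finset ι, (a = b ∨ a ∩ b = ∅) → (b = a ∨ b ∩ a = ∅) := by
    intro a b h
    rcases h with rfl | h
    · exact Or.inl rfl
    · exact Or.inr (by rwa [Finset.inter_comm])
  have hex : ∀ e ∈ E, ∃ i : ℕ, i < l.length ∧ (l.getD i ∅ = e ∨ l.getD i ∅ ∩ e = ∅) := by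
    intro e he
    have hmem : e ∈ l := Finset.mem_toList.mpr he
    obtain ⟨i, hi, hgi⟩ := List.mem_iff_getElem.mp hmem
    exact ⟨i, hi, Or.inl (by rw [List.getD_eq_getElem l ∅ hi, hgi])⟩
  have hgetmem : ∀ i : ℕ, i < l.length → l.getD i ∅ ∈ E := by
    intro i hi
    rw [List.getD_eq_getElem l ∅ hi]
    exact Finset.mem_toList.mp (List.getElem_mem hi)
  refine ⟨fun e => if he : e ∈ E then ((Nat.find (hex e he) : ℕ) : ℝ) else 0, ?_⟩
  intro e he e' he'
  simp only [dif_pos he, dif_pos he']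
  constructor
  · intro hse
    have hfind : Nat.find (hex e he) = Nat.find (hex e' he') := by
      exact_mod_cast hse
    obtain ⟨hi, hrel⟩ := Nat.find_spec (hex e he)
    obtain ⟨hi', hrel'⟩ := Nat.find_spec (hex e' he')
    rw [← hfind] at hrel'
    set g := l.getD (Nat.find (hex e he)) ∅ with hg
    have hgE : g ∈ E := hgetmem _ hi
    exact htrans e he g hgE e' he' (hsymm g e hrel) hrel'
  · intro hrel
    have h1 : Nat.find (hex e' he') ≤ Nat.find (hex e he) := by
      apply Nat.find_le
      obtain ⟨hi, hr⟩ := Nat.find_spec (hex e he)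
      exact ⟨hi, htrans _ (hgetmem _ hi) _ he _ he' hr hrel⟩
    have h2 : Nat.find (hex e he) ≤ Nat.find (hex e' he') := by
      apply Nat.find_le
      obtain ⟨hi, hr⟩ := Nat.find_spec (hex e' he')
      exact ⟨hi, htrans _ (hgetmem _ hi) _ he' _ he hr (hsymm _ _ hrel)⟩
    have := le_antisymm h2 h1
    exact_mod_cast congrArg (fun n : ℕ => (n : ℝ)) this

theorem exists_intercepts (s : Finset ι → ℝ) :
    ∀ l : List (Finset ι), l.Nodup →
    ∃ c : Finset ι → ℝ,
      (∀ e ∈ l, ∀ f ∈ l, e ≠ f → s e = s f → c e ≠ c f) ∧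
      (∀ e ∈ l, ∀ f ∈ l, ∀ g ∈ l, e ≠ f → e ≠ g → f ≠ g →
        ∀ p : Pt, p ∈ Ln (s e) (c e) → p ∈ Ln (s f) (c f) → p ∉ Ln (s g) (c g)) := by
  intro l
  induction l with
  | nil => exact fun _ => ⟨fun _ => 0, by simp, by simp⟩
  | cons a l ih =>
    intro hnd
    obtain ⟨ha, hnd'⟩ := List.nodup_cons.mp hnd
    obtain ⟨c, hc1, hc2⟩ := ih hnd'
    classical
    set B1 : Finset ℝ := (l.toFinset.filter (fun f => s f = s a)).image c with hB1
    set B2 : Finset ℝ := ((l.toFinset ×ˢ l.toFinset).filter (fun q => s q.1 ≠ s q.2)).image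
        (fun q => (iptP (s q.1) (c q.1) (s q.2) (c q.2)).2 -
          s a * (iptP (s q.1) (c q.1) (s q.2) (c q.2)).1) with hB2
    obtain ⟨x, hx⟩ := Infinite.exists_notMem_finset (B1 ∪ B2)
    have hx1 : x ∉ B1 := fun h => hx (Finset.mem_union_left _ h)
    have hx2 : x ∉ B2 := fun h => hx (Finset.mem_union_right _ h)
    set c' := Function.update c a x with hc'
    have hupd : ∀ f ∈ l, c' f = c f := by
      intro f hf
      apply Function.update_of_ne
      intro hfa; exact ha (hfa ▸ hf)
    have hupda : c' a = x := Function.update_self a x c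
    -- key: a point on two old distinct lines is not on line a
    have hkey : ∀ f ∈ l, ∀ g ∈ l, f ≠ g → ∀ p : Pt,
        p ∈ Ln (s f) (c f) → p ∈ Ln (s g) (c g) → p ∉ Ln (s a) x := by
      intro f hf g hg hfg p hpf hpg hpa
      by_cases hsfg : s f = s g
      · have : c f ≠ c g := hc1 f hf g hg hfg hsfg
        exact Ln_parallel_disjoint this hpf (by rwa [← hsfg] at hpg)
      · have hp := eq_iptP hsfg hpf hpg
        apply hx2
        rw [hB2]
        apply Finset.mem_image.mpr
        refine ⟨(f, g), ?_, ?_⟩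
        · exact Finset.mem_filter.mpr ⟨Finset.mem_product.mpr
            ⟨List.mem_toFinset.mpr hf, List.mem_toFinset.mpr hg⟩, hsfg⟩
        · have hpa' : p.2 = s a * p.1 + x := hpa
          rw [← hp]
          linarith [hpa']
    refine ⟨c', ?_, ?_⟩
    · intro e he f hf hef hsef
      rcases List.mem_cons.mp he with rfl | he' <;> rcases List.mem_cons.mp hf with rfl | hf'
      · exact absurd rfl hef
      · rw [hupda, hupd f hf']
        intro hcf
        apply hx1
        rw [hB1]
        exact Finset.mem_image.mpr ⟨f, Finset.mem_filter.mpr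
          ⟨List.mem_toFinset.mpr hf', hsef.symm⟩, hcf.symm⟩
      · rw [hupda, hupd e he']
        intro hcf
        apply hx1
        rw [hB1]
        exact Finset.mem_image.mpr ⟨e, Finset.mem_filter.mpr
          ⟨List.mem_toFinset.mpr he', hsef⟩, hcf⟩
      · rw [hupd e he', hupd f hf']
        exact hc1 e he' f hf' hef hsef
    · intro e he f hf g hg hef heg hfg p hpe hpf hpg
      rcases List.mem_cons.mp he with rfl | he' <;> rcases List.mem_cons.mp hf with rfl | hf' <;>
        rcases List.mem_cons.mp hg with rfl | hg'
      · exact hef rfl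
      · exact hef rfl
      · exact heg rfl
      · -- e = a, f g old
        rw [hupd f hf'] at hpf
        rw [hupd g hg'] at hpg
        rw [hupda] at hpe
        exact hkey f hf' g hg' hfg p hpf hpg hpe
      · exact hfg rfl
      · -- f = a, e g old
        rw [hupd e he'] at hpe
        rw [hupd g hg'] at hpg
        rw [hupda] at hpf
        exact hkey e he' g hg' heg p hpe hpg hpf
      · -- g = a, e f old
        rw [hupd e he'] at hpe
        rw [hupd f hf'] at hpf
        rw [hupda] at hpg
        exact hkey e he' f hf' hef p hpe hpf hpg
      · rw [hupd e he'] at hpe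
        rw [hupd f hf'] at hpf
        rw [hupd g hg'] at hpg
        exact hc2 e he' f hf' g hg' hef heg hfg p hpe hpf hpg

end Constr
section Constr2

variable {ι : Type} [DecidableEq ι]

theorem exists_lowpts (E : Finset (Finset ι)) (s c : Finset ι → ℝ)
    (hsc : ∀ e ∈ E, ∀ f ∈ E, e ≠ f → s e = s f → c e ≠ c f)
    (P0 : Finset Pt) :
    ∀ l : List ι, l.Nodup → (∀ v ∈ l, (E.filter (fun e => v ∈ e)).card ≤ 1) →
    ∃ f : ι → Pt, ∀ v ∈ l,
      (∀ e ∈ E, (v ∈ e ↔ f v ∈ Ln (s e) (c e))) ∧ f v ∉ P0 ∧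
      ∀ w ∈ l, v ≠ w → f v ≠ f w := by
  classical
  intro l
  induction l with
  | nil => exact fun _ _ => ⟨fun _ => 0, by simp⟩
  | cons v l ih =>
    intro hnd hdeg
    obtain ⟨hv, hnd'⟩ := List.nodup_cons.mp hnd
    obtain ⟨f, hf⟩ := ih hnd' (fun w hw => hdeg w (List.mem_cons_of_mem _ hw))
    set A : Finset Pt := P0 ∪ l.toFinset.image f with hA
    have hcard := hdeg v List.mem_cons_self
    obtain ⟨p, hp1, hp2⟩ : ∃ p : Pt, (∀ e ∈ E, (v ∈ e ↔ p ∈ Ln (s e) (c e))) ∧ p ∉ A := by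
      rcases Nat.le_one_iff_eq_zero_or_eq_one.mp hcard with h0 | h1
      · have hve : ∀ e ∈ E, v ∉ e := by
          intro e he hvemem
          have hmm : e ∈ E.filter (fun e => v ∈ e) := Finset.mem_filter.mpr ⟨he, hvemem⟩
          rw [Finset.card_eq_zero.mp h0] at hmm
          exact absurd hmm (Finset.notMem_empty e)
        obtain ⟨x₀, hx₀⟩ := Infinite.exists_notMem_finset (A.image Prod.fst)
        obtain ⟨y₀, hy₀⟩ := Infinite.exists_notMem_finset (E.image (fun e => s e * x₀ + c e))
        refine ⟨(x₀, y₀), ?_, ?_⟩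
        · intro e he
          simp only [hve e he, false_iff]
          intro hmem
          exact hy₀ (Finset.mem_image.mpr ⟨e, he, (hmem : y₀ = s e * x₀ + c e).symm⟩)
        · intro hmem
          exact hx₀ (Finset.mem_image.mpr ⟨_, hmem, rfl⟩)
      · obtain ⟨e₀, he₀⟩ := Finset.card_eq_one.mp h1
        have he₀f : e₀ ∈ E.filter (fun e => v ∈ e) := by
          rw [he₀]; exact Finset.mem_singleton_self e₀
        have he₀E : e₀ ∈ E := (Finset.mem_filter.mp he₀f).1
        have hve₀ : v ∈ e₀ := (Finset.mem_filter.mp he₀f).2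
        have huniq : ∀ e ∈ E, v ∈ e → e = e₀ := by
          intro e he hvemem
          have hmm : e ∈ E.filter (fun e => v ∈ e) := Finset.mem_filter.mpr ⟨he, hvemem⟩
          rw [he₀] at hmm
          exact Finset.mem_singleton.mp hmm
        obtain ⟨x₀, hx₀⟩ := Infinite.exists_notMem_finset
          ((A.image Prod.fst) ∪ E.image (fun g => (c g - c e₀) / (s e₀ - s g)))
        refine ⟨(x₀, s e₀ * x₀ + c e₀), ?_, ?_⟩
        · intro e he
          by_cases hee : e = e₀
          · subst hee
            simp only [hve₀, true_iff]
            exact rfl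
          · have hv' : v ∉ e := fun h => hee (huniq e he h)
            simp only [hv', false_iff]
            intro hmem
            by_cases hse : s e = s e₀
            · have hmem' : s e₀ * x₀ + c e₀ = s e * x₀ + c e := hmem
              rw [hse] at hmem'
              exact hsc e he e₀ he₀E hee hse (by linarith)
            · have hmem₀ : ((x₀ : ℝ), s e₀ * x₀ + c e₀) ∈ Ln (s e₀) (c e₀) := rfl
              have hse' : s e₀ ≠ s e := fun h => hse h.symm
              have heq := eq_iptP hse' hmem₀ hmem
              have hx : x₀ = (c e - c e₀) / (s e₀ - s e) := congrArg Prod.fst heq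
              exact hx₀ (Finset.mem_union_right _ (Finset.mem_image.mpr ⟨e, he, hx.symm⟩))
        · intro hmem
          exact hx₀ (Finset.mem_union_left _ (Finset.mem_image.mpr ⟨_, hmem, rfl⟩))
    refine ⟨Function.update f v p, ?_⟩
    intro u hu
    rcases List.mem_cons.mp hu with rfl | hu'
    · rw [Function.update_self]
      refine ⟨hp1, fun h => hp2 (Finset.mem_union_left _ h), ?_⟩
      intro w hw hne
      rcases List.mem_cons.mp hw with rfl | hw'
      · exact absurd rfl hne
      · rw [Function.update_of_ne (fun h => hv (by rwa [h] at hw'))]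
        intro hpw
        exact hp2 (Finset.mem_union_right _
          (Finset.mem_image.mpr ⟨w, List.mem_toFinset.mpr hw', hpw.symm⟩))
    · have hun : u ≠ v := fun h => hv (h ▸ hu')
      rw [Function.update_of_ne hun]
      obtain ⟨h1, h2, h3⟩ := hf u hu'
      refine ⟨h1, h2, ?_⟩
      intro w hw hne
      rcases List.mem_cons.mp hw with rfl | hw'
      · rw [Function.update_self]
        intro hfu
        exact hp2 (Finset.mem_union_right _
          (Finset.mem_image.mpr ⟨u, List.mem_toFinset.mpr hu', hfu⟩))
      · rw [Function.update_of_ne (fun h => hv (by rwa [h] at hw'))]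
        exact h3 w hw' hne

theorem exists_pt2 (E : Finset (Finset ι)) (s c : Finset ι → ℝ)
    (hs : ∀ e ∈ E, ∀ e' ∈ E, (s e = s e' ↔ (e = e' ∨ e ∩ e' = ∅)))
    (hc2 : ∀ e ∈ E, ∀ f ∈ E, ∀ g ∈ E, e ≠ f → e ≠ g → f ≠ g →
        ∀ p : Pt, p ∈ Ln (s e) (c e) → p ∈ Ln (s f) (c f) → p ∉ Ln (s g) (c g))
    (v : ι) (h2 : (E.filter (fun e => v ∈ e)).card = 2) :
    ∃ p : Pt, (∀ e ∈ E, (v ∈ e ↔ p ∈ Ln (s e) (c e))) ∧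
      p ∈ ((E ×ˢ E).filter (fun q => s q.1 ≠ s q.2)).image
        (fun q => iptP (s q.1) (c q.1) (s q.2) (c q.2)) := by
  classical
  obtain ⟨e₁, e₂, hne, hfil⟩ := Finset.card_eq_two.mp h2
  have h₁ : e₁ ∈ E.filter (fun e => v ∈ e) := by
    rw [hfil]; exact Finset.mem_insert_self _ _
  have h₂ : e₂ ∈ E.filter (fun e => v ∈ e) := by
    rw [hfil]; exact Finset.mem_insert.mpr (Or.inr (Finset.mem_singleton_self _))
  have he₁E : e₁ ∈ E := (Finset.mem_filter.mp h₁).1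
  have hv₁ : v ∈ e₁ := (Finset.mem_filter.mp h₁).2
  have he₂E : e₂ ∈ E := (Finset.mem_filter.mp h₂).1
  have hv₂ : v ∈ e₂ := (Finset.mem_filter.mp h₂).2
  have hs12 : s e₁ ≠ s e₂ := by
    intro heq
    rcases (hs e₁ he₁E e₂ he₂E).mp heq with rfl | hdisj
    · exact hne rfl
    · have hmm : v ∈ e₁ ∩ e₂ := Finset.mem_inter.mpr ⟨hv₁, hv₂⟩
      rw [hdisj] at hmm
      exact absurd hmm (Finset.notMem_empty v)
  refine ⟨iptP (s e₁) (c e₁) (s e₂) (c e₂), ?_, ?_⟩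
  · intro e he
    constructor
    · intro hve
      have hmm : e ∈ E.filter (fun e => v ∈ e) := Finset.mem_filter.mpr ⟨he, hve⟩
      rw [hfil] at hmm
      rcases Finset.mem_insert.mp hmm with rfl | h
      · exact iptP_mem_left _ _ _ _
      · rw [Finset.mem_singleton.mp h]
        exact iptP_mem_right hs12 _ _
    · intro hp
      by_contra hve
      have hee₁ : e₁ ≠ e := fun h => hve (h ▸ hv₁)
      have hee₂ : e₂ ≠ e := fun h => hve (h ▸ hv₂)
      exact hc2 e₁ he₁E e₂ he₂E e he hne hee₁ hee₂ _
        (iptP_mem_left _ _ _ _) (iptP_mem_right hs12 _ _) hp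
  · exact Finset.mem_image.mpr ⟨(e₁, e₂), Finset.mem_filter.mpr
      ⟨Finset.mem_product.mpr ⟨he₁E, he₂E⟩, hs12⟩, rfl⟩

end Constr2

theorem stmt13 {ι : Type} [DecidableEq ι] (H : FinHypergraph ι)
    (hlin : ∀ e ∈ H.E, ∀ e' ∈ H.E, e ≠ e' → (e ∩ e').card ≤ 1)
    (hdeg : ∀ v ∈ H.V, (H.E.filter (fun e => v ∈ e)).card ≤ 2) :
    (∃ R : LineRep H, R.CrossingFree) ↔
      ∀ e₁ ∈ H.E, ∀ e₂ ∈ H.E, ∀ e₃ ∈ H.E, e₁ ≠ e₂ → e₁ ≠ e₃ → e₂ ≠ e₃ →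
        e₁ ∩ e₂ = ∅ → e₂ ∩ e₃ = ∅ → e₁ ∩ e₃ = ∅ := by
  constructor
  · rintro ⟨R, hcf⟩ e₁ he₁ e₂ he₂ e₃ he₃ h12 h13 h23 hd12 hd23
    obtain ⟨a₁, b₁, hab₁, hL₁⟩ := R.β_isLine e₁ he₁
    obtain ⟨a₂, b₂, hab₂, hL₂⟩ := R.β_isLine e₂ he₂
    obtain ⟨a₃, b₃, hab₃, hL₃⟩ := R.β_isLine e₃ he₃
    have hdisj : ∀ e ∈ H.E, ∀ e' ∈ H.E, e ∩ e' = ∅ → ∀ p : Pt, p ∉ R.β e ∩ R.β e' := by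
      intro e he e' he' hdd p hp
      obtain ⟨w, hw, hw'⟩ := (hcf e he e' he').mp ⟨p, hp⟩
      have hmm : w ∈ e ∩ e' := Finset.mem_inter.mpr ⟨hw, hw'⟩
      rw [hdd] at hmm
      exact absurd hmm (Finset.notMem_empty w)
    have hdet12 : (b₁ - a₁).1 * (b₂ - a₂).2 - (b₁ - a₁).2 * (b₂ - a₂).1 = 0 := by
      by_contra hD
      obtain ⟨p, hp1, hp2⟩ := lines_meet hD
      exact hdisj e₁ he₁ e₂ he₂ hd12 p ⟨by rw [hL₁]; exact hp1, by rw [hL₂]; exact hp2⟩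
    have hdet23 : (b₂ - a₂).1 * (b₃ - a₃).2 - (b₂ - a₂).2 * (b₃ - a₃).1 = 0 := by
      by_contra hD
      obtain ⟨p, hp1, hp2⟩ := lines_meet hD
      exact hdisj e₂ he₂ e₃ he₃ hd23 p ⟨by rw [hL₂]; exact hp1, by rw [hL₃]; exact hp2⟩
    have hd2ne : b₂ - a₂ ≠ 0 := sub_ne_zero.mpr (Ne.symm hab₂)
    have hdet13 := det_aux hd2ne hdet12 hdet23
    by_contra hne13
    obtain ⟨w, hw⟩ := Finset.nonempty_iff_ne_empty.mpr hne13
    have hw1 : w ∈ e₁ := (Finset.mem_inter.mp hw).1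
    have hw3 : w ∈ e₃ := (Finset.mem_inter.mp hw).2
    have hwV : w ∈ H.V := H.edge_subset e₁ he₁ hw1
    have hα1 : R.α w ∈ R.β e₁ := (R.incidence w hwV e₁ he₁).mp hw1
    have hα3 : R.α w ∈ R.β e₃ := (R.incidence w hwV e₃ he₃).mp hw3
    rw [hL₁] at hα1
    rw [hL₃] at hα3
    have hbeq : R.β e₁ = R.β e₃ := by
      rw [hL₁, hL₃]
      exact lines_eq hab₁ hab₃ hdet13 hα1 hα3
    exact h13 (R.β_inj (Finset.mem_coe.mpr he₁) (Finset.mem_coe.mpr he₃) hbeq)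
  · intro hm
    classical
    obtain ⟨s, hs⟩ := exists_slopes H.E hm
    obtain ⟨c, hc1l, hc2l⟩ := exists_intercepts s H.E.toList (Finset.nodup_toList _)
    have hc1 : ∀ e ∈ H.E, ∀ f ∈ H.E, e ≠ f → s e = s f → c e ≠ c f := fun e he f hf =>
      hc1l e (Finset.mem_toList.mpr he) f (Finset.mem_toList.mpr hf)
    have hc2 : ∀ e ∈ H.E, ∀ f ∈ H.E, ∀ g ∈ H.E, e ≠ f → e ≠ g → f ≠ g →
        ∀ p : Pt, p ∈ Ln (s e) (c e) → p ∈ Ln (s f) (c f) → p ∉ Ln (s g) (c g) :=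
      fun e he f hf g hg => hc2l e (Finset.mem_toList.mpr he) f (Finset.mem_toList.mpr hf)
        g (Finset.mem_toList.mpr hg)
    set ipts : Finset Pt := ((H.E ×ˢ H.E).filter (fun q => s q.1 ≠ s q.2)).image
        (fun q => iptP (s q.1) (c q.1) (s q.2) (c q.2)) with hipts
    set lowl := (H.V.filter (fun v => (H.E.filter (fun e => v ∈ e)).card ≤ 1)).toList with hlowl
    obtain ⟨f, hfl⟩ := exists_lowpts H.E s c hc1 ipts lowl (Finset.nodup_toList _)
      (fun v hvmem => (Finset.mem_filter.mp (Finset.mem_toList.mp hvmem)).2)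
    have hlowmem : ∀ v ∈ H.V, (H.E.filter (fun e => v ∈ e)).card ≠ 2 → v ∈ lowl := by
      intro v hv h2
      apply Finset.mem_toList.mpr
      apply Finset.mem_filter.mpr
      exact ⟨hv, by have := hdeg v hv; omega⟩
    have hpt2 := fun (v : ι) (h : (H.E.filter (fun e => v ∈ e)).card = 2) =>
      exists_pt2 H.E s c hs hc2 v h
    set α : ι → Pt := fun v =>
      if h : (H.E.filter (fun e => v ∈ e)).card = 2 then Classical.choose (hpt2 v h) else f v
      with hα
    have hα2 : ∀ v (h : (H.E.filter (fun e => v ∈ e)).card = 2),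
        α v = Classical.choose (hpt2 v h) := by
      intro v h
      simp only [hα]
      exact dif_pos h
    have hα1 : ∀ v, (H.E.filter (fun e => v ∈ e)).card ≠ 2 → α v = f v := by
      intro v h
      simp only [hα]
      exact dif_neg h
    have hspec : ∀ v (h : (H.E.filter (fun e => v ∈ e)).card = 2),
        (∀ e ∈ H.E, (v ∈ e ↔ α v ∈ Ln (s e) (c e))) ∧ α v ∈ ipts := by
      intro v h
      rw [hα2 v h]
      exact Classical.choose_spec (hpt2 v h)
    refine ⟨⟨α, fun e => Ln (s e) (c e), ?_, ?_, ?_, ?_⟩, ?_⟩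
    · -- α_inj
      intro u hu v hv heq
      by_contra hne
      have huV : u ∈ H.V := Finset.mem_coe.mp hu
      have hvV : v ∈ H.V := Finset.mem_coe.mp hv
      by_cases h2u : (H.E.filter (fun e => u ∈ e)).card = 2 <;>
        by_cases h2v : (H.E.filter (fun e => v ∈ e)).card = 2
      · obtain ⟨hiu, _⟩ := hspec u h2u
        obtain ⟨hiv, _⟩ := hspec v h2v
        obtain ⟨e₁, e₂, hne12, hfil⟩ := Finset.card_eq_two.mp h2u
        have h₁ : e₁ ∈ H.E.filter (fun e => u ∈ e) := by
          rw [hfil]; exact Finset.mem_insert_self _ _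
        have h₂ : e₂ ∈ H.E.filter (fun e => u ∈ e) := by
          rw [hfil]; exact Finset.mem_insert.mpr (Or.inr (Finset.mem_singleton_self _))
        have he₁E : e₁ ∈ H.E := (Finset.mem_filter.mp h₁).1
        have hu₁ : u ∈ e₁ := (Finset.mem_filter.mp h₁).2
        have he₂E : e₂ ∈ H.E := (Finset.mem_filter.mp h₂).1
        have hu₂ : u ∈ e₂ := (Finset.mem_filter.mp h₂).2
        have hv₁ : v ∈ e₁ := (hiv e₁ he₁E).mpr (by rw [← heq]; exact (hiu e₁ he₁E).mp hu₁)
        have hv₂ : v ∈ e₂ := (hiv e₂ he₂E).mpr (by rw [← heq]; exact (hiu e₂ he₂E).mp hu₂)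
        have hsub : ({u, v} : Finset ι) ⊆ e₁ ∩ e₂ := by
          intro w hw
          rcases Finset.mem_insert.mp hw with rfl | hw
          · exact Finset.mem_inter.mpr ⟨hu₁, hu₂⟩
          · rw [Finset.mem_singleton.mp hw]
            exact Finset.mem_inter.mpr ⟨hv₁, hv₂⟩
        have hcard2 : ({u, v} : Finset ι).card = 2 := Finset.card_pair hne
        have hle := Finset.card_le_card hsub
        have hle1 := hlin e₁ he₁E e₂ he₂E hne12
        omega
      · obtain ⟨_, hmem⟩ := hspec u h2u
        rw [hα1 v h2v] at heq
        rw [heq] at hmem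
        exact (hfl v (hlowmem v hvV h2v)).2.1 hmem
      · obtain ⟨_, hmem⟩ := hspec v h2v
        rw [hα1 u h2u] at heq
        rw [← heq] at hmem
        exact (hfl u (hlowmem u huV h2u)).2.1 hmem
      · rw [hα1 u h2u, hα1 v h2v] at heq
        exact (hfl u (hlowmem u huV h2u)).2.2 v (hlowmem v hvV h2v) hne heq
    · -- β_inj
      intro e he e' he' heq
      have heE : e ∈ H.E := Finset.mem_coe.mp he
      have he'E : e' ∈ H.E := Finset.mem_coe.mp he'
      obtain ⟨hseq, hceq⟩ := Ln_inj heq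
      rcases (hs e heE e' he'E).mp hseq with h | h
      · exact h
      · by_contra hne
        exact hc1 e heE e' he'E hne hseq hceq
    · exact fun e _ => Ln_isLine _ _
    · -- incidence
      intro v hvV e he
      by_cases h2 : (H.E.filter (fun e => v ∈ e)).card = 2
      · exact (hspec v h2).1 e he
      · show v ∈ e ↔ α v ∈ Ln (s e) (c e)
        rw [hα1 v h2]
        exact (hfl v (hlowmem v hvV h2)).1 e he
    · -- CrossingFree
      intro e he e' he'
      show ((Ln (s e) (c e)) ∩ (Ln (s e') (c e'))).Nonempty ↔ ∃ v, v ∈ e ∧ v ∈ e'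
      by_cases hee : e = e'
      · subst hee
        constructor
        · intro _
          obtain ⟨w, hw⟩ := H.edge_nonempty e he
          exact ⟨w, hw, hw⟩
        · intro _
          refine ⟨((0 : ℝ), c e), ?_, ?_⟩ <;>
            · show c e = s e * 0 + c e
              ring
      · by_cases hdd : e ∩ e' = ∅
        · apply iff_of_false
          · rintro ⟨p, hp, hp'⟩
            have hseq : s e = s e' := (hs e he e' he').mpr (Or.inr hdd)
            have hcne : c e ≠ c e' := hc1 e he e' he' hee hseq
            rw [← hseq] at hp'
            exact Ln_parallel_disjoint hcne hp hp'
          · rintro ⟨w, hw, hw'⟩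
            have hmm : w ∈ e ∩ e' := Finset.mem_inter.mpr ⟨hw, hw'⟩
            rw [hdd] at hmm
            exact absurd hmm (Finset.notMem_empty w)
        · apply iff_of_true
          · have hsne : s e ≠ s e' := by
              intro h
              rcases (hs e he e' he').mp h with h' | h'
              exacts [hee h', hdd h']
            exact ⟨iptP (s e) (c e) (s e') (c e'), iptP_mem_left _ _ _ _,
              iptP_mem_right hsne _ _⟩
          · obtain ⟨w, hw⟩ := Finset.nonempty_iff_ne_empty.mpr hdd
            exact ⟨w, (Finset.mem_inter.mp hw).1, (Finset.mem_inter.mp hw).2⟩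
end

section
/- Let H=(V,E) be a linear hypergraph in which every vertex has degree at most 2, with hyperedges enumerated e1,…,en. Suppose there exists a permutation π of {1,…,n} such that for all 1 ≤ i < j ≤ n, e_i ∩ e_j ≠ ∅ if and only if π(i) > π(j) (i.e., the hyperedge intersection graph of H is a permutation graph). Then H admits a strict crossing-free segment representation. -/
set_option maxRecDepth 8000

namespace SegHelper
noncomputable section
open Set

variable {n : ℕ}

def xc (i : Fin n) : ℝ := (i : ℕ)

lemma xc_inj {i j : Fin n} (h : xc i = xc j) : i = j :=
  Fin.val_injective (Nat.cast_injective h)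

lemma xc_lt {i j : Fin n} (h : i < j) : xc i < xc j := by
  simpa [xc] using (Nat.cast_lt (α := ℝ)).2 h

def seg (t : Fin n → ℝ) (i : Fin n) : Set Pt := segment ℝ (xc i, 0) (t i, 1)

lemma mem_seg {t : Fin n → ℝ} {i : Fin n} {p : Pt} :
    p ∈ seg t i ↔ p.2 ∈ Icc (0:ℝ) 1 ∧ p.1 = (1 - p.2) * xc i + p.2 * t i := by
  rw [seg, segment_eq_image]
  constructor
  · rintro ⟨θ, hθ, rfl⟩
    simpa [Prod.smul_mk] using hθ
  · rintro ⟨h1, h2⟩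
    exact ⟨p.2, h1, by simp [Prod.smul_mk, ← h2]⟩

lemma left_mem_seg (t : Fin n → ℝ) (i : Fin n) : ((xc i, 0) : Pt) ∈ seg t i :=
  left_mem_segment ℝ _ _

lemma seg_subsingleton (t : Fin n → ℝ) {i j : Fin n} (hij : i ≠ j) :
    (seg t i ∩ seg t j).Subsingleton := by
  rintro p ⟨hpi, hpj⟩ q ⟨hqi, hqj⟩
  rw [mem_seg] at hpi hpj hqi hqj
  have hd : xc i - xc j ≠ 0 := fun h => hij (xc_inj (by linarith))
  have h1 : (xc i - xc j) + p.2 * ((t i - t j) - (xc i - xc j)) = 0 := by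
    nlinarith [hpi.2, hpj.2]
  have h2 : (xc i - xc j) + q.2 * ((t i - t j) - (xc i - xc j)) = 0 := by
    nlinarith [hqi.2, hqj.2]
  have hc : (t i - t j) - (xc i - xc j) ≠ 0 := by
    intro h; rw [h] at h1; simp at h1; exact hd (by linarith)
  have hsnd : p.2 = q.2 := by
    have : (p.2 - q.2) * ((t i - t j) - (xc i - xc j)) = 0 := by linarith
    rcases mul_eq_zero.1 this with h | h
    · linarith
    · exact absurd h hc
  have hfst : p.1 = q.1 := by rw [hpi.2, hqi.2, hsnd]
  exact Prod.ext hfst hsnd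

lemma seg_cross (t : Fin n → ℝ) (htinj : Function.Injective t) {i j : Fin n} (hij : i < j) :
    (seg t i ∩ seg t j).Nonempty ↔ t j < t i := by
  have hd : xc i - xc j < 0 := by have := xc_lt hij; linarith
  constructor
  · rintro ⟨p, hpi, hpj⟩
    rw [mem_seg] at hpi hpj
    have h1 : (xc i - xc j) + p.2 * ((t i - t j) - (xc i - xc j)) = 0 := by
      nlinarith [hpi.2, hpj.2]
    have h0 : (0:ℝ) ≤ p.2 := hpi.1.1
    have h01 : p.2 ≤ 1 := hpi.1.2
    have htne : t i ≠ t j := fun h => hij.ne (htinj h)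
    have hcpos : 0 < (t i - t j) - (xc i - xc j) := by
      by_contra hc
      push_neg at hc
      nlinarith [mul_nonpos_of_nonneg_of_nonpos h0 hc]
    have hle : p.2 * ((t i - t j) - (xc i - xc j)) ≤ (t i - t j) - (xc i - xc j) := by
      nlinarith
    rcases lt_trichotomy (t j) (t i) with h | h | h
    · exact h
    · exact absurd h.symm htne
    · exfalso; linarith
  · intro h
    set c : ℝ := (t i - t j) - (xc i - xc j) with hc
    have hcpos : 0 < c := by simp only [hc]; nlinarith
    set θ : ℝ := (xc j - xc i)/c with hθ
    have hkey : θ * c = xc j - xc i := div_mul_cancel₀ _ hcpos.ne'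
    have hθ0 : 0 ≤ θ := div_nonneg (by linarith) hcpos.le
    have hθ1 : θ ≤ 1 := by rw [hθ, div_le_one hcpos]; simp only [hc]; nlinarith
    refine ⟨((1 - θ) * xc i + θ * t i, θ), ?_, ?_⟩
    · rw [mem_seg]
      exact ⟨⟨hθ0, hθ1⟩, rfl⟩
    · rw [mem_seg]
      refine ⟨⟨hθ0, hθ1⟩, ?_⟩
      simp only
      nlinarith [hkey]

lemma seg_not_concurrent (t : Fin n → ℝ) {i j k : Fin n}
    (hD : xc i * (t j - t k) + xc j * (t k - t i) + xc k * (t i - t j) ≠ 0)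
    {p : Pt} (hpi : p ∈ seg t i) (hpj : p ∈ seg t j) (hpk : p ∈ seg t k) : False := by
  rw [mem_seg] at hpi hpj hpk
  apply hD
  have h1 : (xc i - xc j) + p.2 * ((t i - t j) - (xc i - xc j)) = 0 := by
    nlinarith [hpi.2, hpj.2]
  have h2 : (xc i - xc k) + p.2 * ((t i - t k) - (xc i - xc k)) = 0 := by
    nlinarith [hpi.2, hpk.2]
  linear_combination ((t i - t k) - (xc i - xc k)) * h1 - ((t i - t j) - (xc i - xc j)) * h2

lemma seg_infinite (t : Fin n → ℝ) (i : Fin n) : (seg t i).Infinite := by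
  have h : Set.InjOn (fun θ : ℝ => (((1 - θ) * xc i + θ * t i, θ) : Pt)) (Icc 0 1) := by
    intro a _ b _ hab
    exact congrArg Prod.snd hab
  have := (Set.Icc_infinite (by norm_num : (0:ℝ) < 1)).image h
  apply this.mono
  rintro p ⟨θ, hθ, rfl⟩
  rw [mem_seg]
  exact ⟨hθ, rfl⟩

lemma seg_eq_iff (t : Fin n → ℝ) {i j : Fin n} (h : seg t i = seg t j) : i = j := by
  have := left_mem_seg t i
  rw [h, mem_seg] at this
  apply xc_inj
  have := this.2
  simpa using this

lemma exists_t : ∀ (n : ℕ) (g : Fin n → ℕ),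
    ∃ t : Fin n → ℝ, (∀ i, (g i : ℝ) < t i ∧ t i < g i + 1) ∧
      ∀ i j k : Fin n, i ≠ j → j ≠ k → i ≠ k →
        xc i * (t j - t k) + xc j * (t k - t i) + xc k * (t i - t j) ≠ 0 := by
  intro n
  induction n with
  | zero => exact fun g => ⟨fun i => 0, fun i => i.elim0, fun i => i.elim0⟩
  | succ m ih =>
    intro g
    obtain ⟨t₀, ht₀b, ht₀D⟩ := ih (g ∘ Fin.castSucc)
    set bad : Fin m × Fin m → ℝ := fun p =>
      (xc p.1 * t₀ p.2 - xc p.2 * t₀ p.1 + (m:ℝ) * (t₀ p.1 - t₀ p.2)) / (xc p.1 - xc p.2)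
      with hbad
    set B : Finset ℝ := Finset.univ.image bad with hB
    have hIoo : (Set.Ioo ((g (Fin.last m) : ℝ)) ((g (Fin.last m) : ℝ) + 1)).Infinite :=
      Set.Ioo_infinite (by linarith)
    obtain ⟨r, hr⟩ := (hIoo.diff B.finite_toSet).nonempty
    have hrIoo : (g (Fin.last m) : ℝ) < r ∧ r < g (Fin.last m) + 1 := ⟨hr.1.1, hr.1.2⟩
    have hrB : ∀ p : Fin m × Fin m, r ≠ bad p := by
      intro p hrp
      exact hr.2 (Finset.mem_coe.2 (Finset.mem_image.2 ⟨p, Finset.mem_univ p, hrp.symm⟩))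
    refine ⟨Fin.snoc t₀ r, ?_, ?_⟩
    · intro i
      induction i using Fin.lastCases with
      | last => simpa using hrIoo
      | cast i => simpa using ht₀b i
    · have hxcast : ∀ i : Fin m, xc (Fin.castSucc i) = xc i := by
        intro i; simp [xc]
      have hxlast : xc (Fin.last m) = (m : ℝ) := by simp [xc]
      have key : ∀ i j : Fin m, i ≠ j →
          xc i * (t₀ j - r) + xc j * (r - t₀ i) + (m:ℝ) * (t₀ i - t₀ j) ≠ 0 := by
        intro i j hij h0
        have hx : xc i - xc j ≠ 0 := fun h => hij (xc_inj (by linarith))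
        apply hrB (i, j)
        rw [hbad]
        field_simp
        linarith [h0]
      intro i j k hij hjk hik
      induction i using Fin.lastCases with
      | last =>
        induction j using Fin.lastCases with
        | last => exact absurd rfl hij
        | cast j =>
          induction k using Fin.lastCases with
          | last => exact absurd rfl hik
          | cast k =>
            have hjk' : j ≠ k := fun h => hjk (by rw [h])
            simp only [Fin.snoc_castSucc, Fin.snoc_last, hxcast, hxlast]
            intro h0
            exact key j k hjk' (by linarith)
      | cast i =>
        induction j using Fin.lastCases with
        | last =>
          induction k using Fin.lastCases with
          | last => exact absurd rfl hjk
          | cast k =>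
            have hik' : i ≠ k := fun h => hik (by rw [h])
            simp only [Fin.snoc_castSucc, Fin.snoc_last, hxcast, hxlast]
            intro h0
            exact key k i (Ne.symm hik') (by linarith)
        | cast j =>
          induction k using Fin.lastCases with
          | last =>
            have hij' : i ≠ j := fun h => hij (by rw [h])
            simp only [Fin.snoc_castSucc, Fin.snoc_last, hxcast, hxlast]
            intro h0
            exact key i j hij' (by linarith)
          | cast k =>
            have hij' : i ≠ j := fun h => hij (by rw [h])
            have hjk' : j ≠ k := fun h => hjk (by rw [h])
            have hik' : i ≠ k := fun h => hik (by rw [h])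
            simp only [Fin.snoc_castSucc, hxcast]
            exact ht₀D i j k hij' hjk' hik'

end
end SegHelper

open SegHelper in
theorem stmt14 {ι : Type} [DecidableEq ι] (H : FinHypergraph ι)
    (hlin : ∀ e ∈ H.E, ∀ e' ∈ H.E, e ≠ e' → (e ∩ e').card ≤ 1)
    (hdeg : ∀ v ∈ H.V, (H.E.filter (fun e => v ∈ e)).card ≤ 2)
    (n : ℕ) (e : Fin n → Finset ι) (he : Function.Injective e)
    (hE : H.E = Finset.univ.image e)
    (π : Equiv.Perm (Fin n))
    (hπ : ∀ i j : Fin n, i < j → ((e i ∩ e j).Nonempty ↔ π j < π i)) :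
    ∃ R : SegmentRep H, R.Strict ∧ R.CrossingFree := by
  classical
  obtain ⟨t, htb, htD⟩ := SegHelper.exists_t n (fun i => (π i : ℕ))
  -- order and injectivity of t
  have htord : ∀ i j : Fin n, π i < π j → t i < t j := by
    intro i j h
    have h1 : ((π i : ℕ) : ℝ) + 1 ≤ ((π j : ℕ) : ℝ) := by
      exact_mod_cast Nat.succ_le_of_lt h
    linarith [(htb i).2, (htb j).1]
  have htinj : Function.Injective t := by
    intro i j h
    by_contra hne
    have hπne : π i ≠ π j := fun hh => hne (π.injective hh)
    rcases hπne.lt_or_gt with h' | h'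
    · exact absurd h (ne_of_lt (htord _ _ h'))
    · exact absurd h.symm (ne_of_lt (htord _ _ h'))
  have htiff : ∀ i j : Fin n, t j < t i ↔ π j < π i := by
    intro i j
    constructor
    · intro h
      rcases lt_trichotomy (π j) (π i) with h' | h' | h'
      · exact h'
      · exact absurd (π.injective h') (fun hh => (ne_of_lt h) (by rw [hh]))
      · exact absurd (htord _ _ h') (by intro hh; linarith)
    · exact htord j i
  have hcross : ∀ i j : Fin n, i < j →
      ((seg t i ∩ seg t j).Nonempty ↔ (e i ∩ e j).Nonempty) := by
    intro i j hij
    rw [seg_cross t htinj hij, hπ i j hij, htiff]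
  have hmemE : ∀ i, e i ∈ H.E := fun i => hE ▸ Finset.mem_image_of_mem e (Finset.mem_univ i)
  have hEe : ∀ s ∈ H.E, ∃ i, e i = s := by
    intro s hs
    rw [hE] at hs
    obtain ⟨i, _, hi⟩ := Finset.mem_image.1 hs
    exact ⟨i, hi⟩
  have hcrossv : ∀ i j : Fin n, i ≠ j → ∀ v, v ∈ e i → v ∈ e j →
      (seg t i ∩ seg t j).Nonempty := by
    intro i j hij v hvi hvj
    rcases hij.lt_or_gt with h | h
    · exact (hcross i j h).2 ⟨v, Finset.mem_inter.2 ⟨hvi, hvj⟩⟩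
    · rw [Set.inter_comm]
      exact (hcross j i h).2 ⟨v, Finset.mem_inter.2 ⟨hvj, hvi⟩⟩
  have hdeg2 : ∀ v ∈ H.V, (Finset.univ.filter (fun i : Fin n => v ∈ e i)).card ≤ 2 := by
    intro v hv
    refine le_trans (Finset.card_le_card_of_injOn e ?_ ?_) (hdeg v hv)
    · intro i hi
      exact Finset.mem_filter.2 ⟨hmemE i, (Finset.mem_filter.1 hi).2⟩
    · exact fun a _ b _ h => he h
  -- the sets G i : points on segment i avoiding all other segments
  set G : Fin n → Set Pt := fun i => seg t i \ ⋃ (j : Fin n) (_ : j ≠ i), seg t j with hGdef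
  have hGsub : ∀ i, G i ⊆ seg t i := fun i p hp => hp.1
  have hGnot : ∀ i j : Fin n, j ≠ i → ∀ p ∈ G i, p ∉ seg t j := by
    intro i j hji p hp hpj
    exact hp.2 (Set.mem_iUnion₂.2 ⟨j, hji, hpj⟩)
  have hGinf : ∀ i, (G i).Infinite := by
    intro i
    have hfin : (⋃ (j : Fin n) (_ : j ≠ i), (seg t i ∩ seg t j)).Finite := by
      apply Set.finite_iUnion
      intro j
      by_cases h : j ≠ i
      · exact Set.Finite.subset ((seg_subsingleton t (Ne.symm h)).finite)
          (Set.iUnion_subset fun _ => subset_rfl)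
      · exact Set.Finite.subset Set.finite_empty (Set.iUnion_subset fun hne => (h hne).elim)
    have hsub : seg t i \ (⋃ (j : Fin n) (_ : j ≠ i), (seg t i ∩ seg t j)) ⊆ G i := by
      rintro p ⟨hp, hpU⟩
      refine ⟨hp, ?_⟩
      intro hpU'
      obtain ⟨j, hji, hpj⟩ := Set.mem_iUnion₂.1 hpU'
      exact hpU (Set.mem_iUnion₂.2 ⟨j, hji, hp, hpj⟩)
    exact (((seg_infinite t i).diff hfin).mono hsub)
  -- vertex classes
  set W : Fin n → Finset ι := fun i =>
    H.V.filter (fun u => u ∈ e i ∧ ∀ j, u ∈ e j → j = i) with hWdef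
  set W0 : Finset ι := H.V.filter (fun u => ∀ i, u ∉ e i) with hW0def
  set place1 : Fin n → ι → Pt := fun i v =>
    if hv : v ∈ W i then
      ((Set.Infinite.natEmbedding _ (hGinf i)) ((((W i).equivFin) ⟨v, hv⟩ : Fin _) : ℕ) : Pt)
    else ((0:ℝ), -2) with hplace1
  set place0 : ι → Pt := fun v =>
    if hv : v ∈ W0 then (((((W0.equivFin) ⟨v, hv⟩ : Fin _) : ℕ) : ℝ), -1)
    else ((0:ℝ), -2) with hplace0
  have hplace1_mem : ∀ i v (hv : v ∈ W i), place1 i v ∈ G i := by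
    intro i v hv
    simp only [hplace1]
    rw [dif_pos hv]
    exact Subtype.coe_prop _
  have hplace1_inj : ∀ i v w (hv : v ∈ W i) (hw : w ∈ W i),
      place1 i v = place1 i w → v = w := by
    intro i v w hv hw h
    simp only [hplace1] at h
    rw [dif_pos hv, dif_pos hw] at h
    have h1 := (Set.Infinite.natEmbedding _ (hGinf i)).injective (Subtype.ext h)
    have h3 := ((W i).equivFin).injective (Fin.val_injective h1)
    exact Subtype.ext_iff.1 h3
  have hplace0_snd : ∀ v (hv : v ∈ W0), (place0 v).2 = -1 := by
    intro v hv
    simp only [hplace0]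
    rw [dif_pos hv]
  have hplace0_inj : ∀ v w (hv : v ∈ W0) (hw : w ∈ W0),
      place0 v = place0 w → v = w := by
    intro v w hv hw h
    simp only [hplace0] at h
    rw [dif_pos hv, dif_pos hw] at h
    have h1 : ((((W0.equivFin) ⟨v, hv⟩ : Fin _) : ℕ) : ℝ) = ((((W0.equivFin) ⟨w, hw⟩ : Fin _) : ℕ) : ℝ) :=
      congrArg Prod.fst h
    have h2 := Nat.cast_injective h1
    have h3 := (W0.equivFin).injective (Fin.val_injective h2)
    exact Subtype.ext_iff.1 h3
  -- the vertex map
  set α : ι → Pt := fun v =>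
    if h2 : ∃ p : Fin n × Fin n, p.1 ≠ p.2 ∧ v ∈ e p.1 ∧ v ∈ e p.2 then
      (hcrossv h2.choose.1 h2.choose.2 h2.choose_spec.1 v h2.choose_spec.2.1
        h2.choose_spec.2.2).choose
    else if h1 : ∃ i, v ∈ e i then place1 h1.choose v
    else place0 v with hαdef
  -- incidence characterization
  have hα : ∀ v ∈ H.V, ∀ m : Fin n, (v ∈ e m ↔ α v ∈ seg t m) := by
    intro v hv m
    by_cases h2 : ∃ p : Fin n × Fin n, p.1 ≠ p.2 ∧ v ∈ e p.1 ∧ v ∈ e p.2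
    · have hαv : α v = (hcrossv h2.choose.1 h2.choose.2 h2.choose_spec.1 v h2.choose_spec.2.1
          h2.choose_spec.2.2).choose := by
        simp only [hαdef]; rw [dif_pos h2]
      set i := h2.choose.1 with hi
      set j := h2.choose.2 with hj
      have hij : i ≠ j := h2.choose_spec.1
      have hvi : v ∈ e i := h2.choose_spec.2.1
      have hvj : v ∈ e j := h2.choose_spec.2.2
      have hq := (hcrossv i j hij v hvi hvj).choose_spec
      have hqi : α v ∈ seg t i := by rw [hαv]; exact hq.1
      have hqj : α v ∈ seg t j := by rw [hαv]; exact hq.2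
      have hcard : ∀ m' : Fin n, v ∈ e m' → m' = i ∨ m' = j := by
        intro m' hm'
        by_contra hc
        push_neg at hc
        have hsub : ({i, j, m'} : Finset (Fin n)) ⊆
            Finset.univ.filter (fun k : Fin n => v ∈ e k) := by
          intro k hk
          simp only [Finset.mem_insert, Finset.mem_singleton] at hk
          refine Finset.mem_filter.2 ⟨Finset.mem_univ k, ?_⟩
          rcases hk with rfl | rfl | rfl
          · exact hvi
          · exact hvj
          · exact hm'
        have hc3 : ({i, j, m'} : Finset (Fin n)).card = 3 := by
          rw [Finset.card_insert_of_notMem (by simp [hij, Ne.symm hc.1]),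
            Finset.card_insert_of_notMem (by simp [Ne.symm hc.2]), Finset.card_singleton]
        have := Finset.card_le_card hsub
        have := hdeg2 v hv
        omega
      constructor
      · intro hm
        rcases hcard m hm with rfl | rfl
        · exact hqi
        · exact hqj
      · intro hqm
        by_contra hvm
        have hmi : m ≠ i := fun h => hvm (h ▸ hvi)
        have hmj : m ≠ j := fun h => hvm (h ▸ hvj)
        exact seg_not_concurrent t (htD i j m hij (Ne.symm hmj) (Ne.symm hmi)) hqi hqj hqm
    · by_cases h1 : ∃ i, v ∈ e i
      · have hαv : α v = place1 h1.choose v := by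
          simp only [hαdef]; rw [dif_neg h2, dif_pos h1]
        set i := h1.choose with hi
        have hvi : v ∈ e i := h1.choose_spec
        have huniq : ∀ j, v ∈ e j → j = i := by
          intro j hj
          by_contra hne
          exact h2 ⟨(j, i), hne, hj, hvi⟩
        have hvW : v ∈ W i := by
          rw [hWdef]
          exact Finset.mem_filter.2 ⟨hv, hvi, huniq⟩
        have hmem : α v ∈ G i := by rw [hαv]; exact hplace1_mem i v hvW
        by_cases hmi : m = i
        · subst hmi
          exact ⟨fun _ => hGsub i hmem, fun _ => hvi⟩
        · constructor
          · intro hm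
            exact absurd (huniq m hm) hmi
          · intro hm
            exact absurd hm (hGnot i m hmi _ hmem)
      · have hαv : α v = place0 v := by
          simp only [hαdef]; rw [dif_neg h2, dif_neg h1]
        push_neg at h1
        have hvW0 : v ∈ W0 := by
          rw [hW0def]
          exact Finset.mem_filter.2 ⟨hv, h1⟩
        constructor
        · intro hm
          exact absurd hm (h1 m)
        · intro hm
          rw [mem_seg] at hm
          have := hm.1.1
          rw [hαv, hplace0_snd v hvW0] at this
          norm_num at this
  -- injectivity of α
  have hαinj : Set.InjOn α ↑H.V := by
    intro v hv w hw hvw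
    by_contra hne
    have hpat : ∀ m : Fin n, v ∈ e m ↔ w ∈ e m := by
      intro m
      rw [hα v hv m, hα w hw m, hvw]
    by_cases h2 : ∃ p : Fin n × Fin n, p.1 ≠ p.2 ∧ v ∈ e p.1 ∧ v ∈ e p.2
    · obtain ⟨⟨i, j⟩, hij, hvi, hvj⟩ := h2
      have hwi : w ∈ e i := (hpat i).1 hvi
      have hwj : w ∈ e j := (hpat j).1 hvj
      have hcard := hlin (e i) (hmemE i) (e j) (hmemE j) (fun h => hij (he h))
      have hsub : ({v, w} : Finset ι) ⊆ e i ∩ e j := by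
        intro u hu
        simp only [Finset.mem_insert, Finset.mem_singleton] at hu
        rcases hu with rfl | rfl
        · exact Finset.mem_inter.2 ⟨hvi, hvj⟩
        · exact Finset.mem_inter.2 ⟨hwi, hwj⟩
      have h2c : ({v, w} : Finset ι).card = 2 := Finset.card_pair hne
      have := Finset.card_le_card hsub
      omega
    · by_cases h1 : ∃ i, v ∈ e i
      · have hαv : α v = place1 h1.choose v := by
          simp only [hαdef]; rw [dif_neg h2, dif_pos h1]
        set i := h1.choose with hi
        have hvi : v ∈ e i := h1.choose_spec
        have huniq : ∀ j, v ∈ e j → j = i := by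
          intro j hj
          by_contra hne'
          exact h2 ⟨(j, i), hne', hj, hvi⟩
        have h2w : ¬ ∃ p : Fin n × Fin n, p.1 ≠ p.2 ∧ w ∈ e p.1 ∧ w ∈ e p.2 := by
          rintro ⟨p, hp, hw1, hw2⟩
          exact h2 ⟨p, hp, (hpat p.1).2 hw1, (hpat p.2).2 hw2⟩
        have h1w : ∃ k, w ∈ e k := ⟨i, (hpat i).1 hvi⟩
        have hαw : α w = place1 h1w.choose w := by
          simp only [hαdef]; rw [dif_neg h2w, dif_pos h1w]
        have hki : h1w.choose = i := by
          by_contra hne'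
          exact h2w ⟨(h1w.choose, i), hne', h1w.choose_spec, (hpat i).1 hvi⟩
        have hvW : v ∈ W i := by
          rw [hWdef]; exact Finset.mem_filter.2 ⟨hv, hvi, huniq⟩
        have huniqw : ∀ j, w ∈ e j → j = i := by
          intro j hj
          by_contra hne'
          exact h2w ⟨(j, i), hne', hj, (hpat i).1 hvi⟩
        have hwW : w ∈ W i := by
          rw [hWdef]; exact Finset.mem_filter.2 ⟨hw, (hpat i).1 hvi, huniqw⟩
        refine hne (hplace1_inj i v w hvW hwW ?_)
        rw [hki] at hαw
        rw [← hαv, ← hαw]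
        exact hvw
      · have h1w : ¬ ∃ k, w ∈ e k := by
          rintro ⟨k, hk⟩
          exact h1 ⟨k, (hpat k).2 hk⟩
        have h2w : ¬ ∃ p : Fin n × Fin n, p.1 ≠ p.2 ∧ w ∈ e p.1 ∧ w ∈ e p.2 := by
          rintro ⟨p, hp, hw1, hw2⟩
          exact h1w ⟨p.1, hw1⟩
        have hαv : α v = place0 v := by
          simp only [hαdef]; rw [dif_neg h2, dif_neg h1]
        have hαw : α w = place0 w := by
          simp only [hαdef]; rw [dif_neg h2w, dif_neg h1w]
        push_neg at h1 h1w
        have hvW0 : v ∈ W0 := by rw [hW0def]; exact Finset.mem_filter.2 ⟨hv, h1⟩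
        have hwW0 : w ∈ W0 := by rw [hW0def]; exact Finset.mem_filter.2 ⟨hw, h1w⟩
        exact hne (hplace0_inj v w hvW0 hwW0 (by rw [← hαv, ← hαw]; exact hvw))
  -- the edge map
  set β : Finset ι → Set Pt := fun s =>
    if h : ∃ i, e i = s then seg t h.choose else ∅ with hβdef
  have hβ : ∀ i, β (e i) = seg t i := by
    intro i
    have h : ∃ k, e k = e i := ⟨i, rfl⟩
    simp only [hβdef]
    rw [dif_pos h]
    exact congrArg (seg t) (he h.choose_spec)
  refine ⟨⟨α, β, hαinj, ?_, ?_, ?_⟩, ?_, ?_⟩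
  · -- β injective
    intro s hs s' hs' h
    obtain ⟨i, rfl⟩ := hEe s hs
    obtain ⟨j, rfl⟩ := hEe s' hs'
    rw [hβ, hβ] at h
    exact congrArg e (seg_eq_iff t h)
  · -- β is segments
    intro s hs
    obtain ⟨i, rfl⟩ := hEe s hs
    rw [hβ]
    refine ⟨(xc i, 0), (t i, 1), ?_, rfl⟩
    intro h
    have := congrArg Prod.snd h
    norm_num at this
  · -- incidence
    intro v hv s hs
    obtain ⟨m, rfl⟩ := hEe s hs
    rw [hβ]
    exact hα v hv m
  · -- strict
    dsimp only [SegmentRep.Strict]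
    intro s hs s' hs' hne
    obtain ⟨i, rfl⟩ := hEe s hs
    obtain ⟨j, rfl⟩ := hEe s' hs'
    rw [hβ, hβ]
    exact seg_subsingleton t (fun h => hne (congrArg e h))
  · -- crossing-free
    dsimp only [SegmentRep.CrossingFree]
    intro s hs s' hs'
    obtain ⟨i, rfl⟩ := hEe s hs
    obtain ⟨j, rfl⟩ := hEe s' hs'
    rw [hβ, hβ]
    rcases lt_trichotomy i j with h | h | h
    · rw [hcross i j h]
      constructor
      · rintro ⟨v, hv⟩
        exact ⟨v, Finset.mem_inter.1 hv⟩
      · rintro ⟨v, hv1, hv2⟩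
        exact ⟨v, Finset.mem_inter.2 ⟨hv1, hv2⟩⟩
    · subst h
      refine iff_of_true ⟨(xc i, 0), left_mem_seg t i, left_mem_seg t i⟩ ?_
      obtain ⟨v, hv⟩ := H.edge_nonempty (e i) (hmemE i)
      exact ⟨v, hv, hv⟩
    · rw [Set.inter_comm, hcross j i h]
      constructor
      · rintro ⟨v, hv⟩
        have := Finset.mem_inter.1 hv
        exact ⟨v, this.2, this.1⟩
      · rintro ⟨v, hv1, hv2⟩
        exact ⟨v, Finset.mem_inter.2 ⟨hv2, hv1⟩⟩
end

section
/- Let H be the hypergraph on the 18 pairwise distinct vertices p1,…,p9, p1',…,p9' whose hyperedges are the eight Pappus-gadget hyperedges on p1,…,p9, the eight Pappus-gadget hyperedges on p1',…,p9', together with the two hyperedges {p7', p8, p9} and {p7, p8', p9'}. Then H has no line representation. -/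
set_option maxRecDepth 8000

/-- Two Pappus gadgets joined by two extra hyperedges.
Vertex `i : Fin 18` stands for `p(i+1)` if `i ≤ 8` and for `p(i-8)'` if `i ≥ 9`.
The anchors of the first gadget are `p7 = 6, p8 = 7, p9 = 8`, those of the second
are `p7' = 15, p8' = 16, p9' = 17`. -/
def twoPappus : FinHypergraph (Fin 18) where
  V := Finset.univ
  E := {({0, 1, 2} : Finset (Fin 18)), {3, 4, 5}, {0, 3, 7}, {0, 4, 8},
        {1, 3, 6}, {1, 5, 8}, {2, 4, 6}, {2, 5, 7},
        {9, 10, 11}, {12, 13, 14}, {9, 12, 16}, {9, 13, 17},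
        {10, 12, 15}, {10, 14, 17}, {11, 13, 15}, {11, 14, 16},
        {15, 7, 8}, {6, 16, 17}}
  edge_nonempty := by
    intro e he
    fin_cases he <;> exact Finset.insert_nonempty _ _
  edge_subset := fun e _ => Finset.subset_univ e


set_option maxHeartbeats 1000000 in
private lemma pappus_red (s t x4 y4 x5 y5 x6 y6 x7 y7 x8 y8 x9 y9 : ℝ)
    (h2 : (x5-x4)*(y6-y4)-(x6-x4)*(y5-y4) = 0)
    (h3 : x4*y8-x8*y4 = 0)
    (h4 : x5*y9-x9*y5 = 0)
    (h5 : (x4-s)*y7-(x7-s)*y4 = 0)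
    (h6 : (x6-s)*y9-(x9-s)*y6 = 0)
    (h7 : (x5-t)*y7-(x7-t)*y5 = 0)
    (h8 : (x6-t)*y8-(x8-t)*y6 = 0)
    (hD7 : (x4-s)*y5-(x5-t)*y4 ≠ 0)
    (hD8 : x4*y6-(x6-t)*y4 ≠ 0)
    (hD9 : x5*y6-(x6-s)*y5 ≠ 0) :
    (x8-x7)*(y9-y7)-(x9-x7)*(y8-y7) = 0 := by
  have key : ((x8-x7)*(y9-y7)-(x9-x7)*(y8-y7)) *
      (((x4-s)*y5-(x5-t)*y4) * ((x4*y6-(x6-t)*y4) * (x5*y6-(x6-s)*y5))) = 0 := by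
    linear_combination (norm := ring1)
      (-y6*s*t^2*y4*y5 + y6*s^2*t*y4*y5) * h2 +
      (-t*x6^2*y4*y5*y9 + t*x6^2*y4*y5*y7 + t^2*x6*y4*y5*y9 - t^2*x6*y4*y5*y7 + s*x6^2*y5^2*y9 - s*x6^2*y5^2*y7 - s*t*x6*y5^2*y9 + s*t*x6*y5^2*y7 + s*t*x6*y4*y5*y9 - s*t*x6*y4*y5*y7 - s*t^2*y4*y5*y9 + s*t^2*y4*y5*y7 - s^2*x6*y5^2*y9 + s^2*x6*y5^2*y7 + s^2*t*y5^2*y9 - s^2*t*y5^2*y7 - x4*x6^2*y5^2*y9 + x4*x6^2*y5^2*y7 + x4*t*x6*y5^2*y9 - x4*t*x6*y5^2*y7 + x4*s*x6*y5^2*y9 - x4*s*x6*y5^2*y7 - x4*s*t*y5^2*y9 + x4*s*t*y5^2*y7 + x5*x6^2*y4*y5*y9 - x5*x6^2*y4*y5*y7 - x5*t*x6*y4*y5*y9 + x5*t*x6*y4*y5*y7 - x5*s*x6*y4*y5*y9 + x5*s*x6*y4*y5*y7 + x5*s*t*y4*y5*y9 - x5*s*t*y4*y5*y7 + y6*t*x6*y4*y5*x9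 - y6*t*x6*y4*y5*x7 - y6*s*x6*y5^2*x9 + y6*s*x6*y5^2*x7 - y6*s*t*y4*y5*x9 + y6*s*t*y4*y5*x7 + y6*s^2*y5^2*x9 - y6*s^2*y5^2*x7 + y6*x4*x6*y5^2*x9 - y6*x4*x6*y5^2*x7 - y6*x4*s*y5^2*x9 + y6*x4*s*y5^2*x7 - y6*x5*x6*y4*y5*x9 + y6*x5*x6*y4*y5*x7 + y6*x5*t*x6*y4*y9 - y6*x5*t*x6*y4*y7 - y6*x5*t^2*y4*y9 + y6*x5*t^2*y4*y7 + y6*x5*s*y4*y5*x9 - y6*x5*s*y4*y5*x7 - y6*x5*s*x6*y5*y9 + y6*x5*s*x6*y5*y7 + y6*x5*s*t*y5*y9 - y6*x5*s*t*y5*y7 + y6*x5*x4*x6*y5*y9 - y6*x5*x4*x6*y5*y7 - y6*x5*x4*t*y5*y9 + y6*x5*x4*t*y5*y7 - y6*x5^2*x6*y4*y9 + y6*x5^2*x6*y4*y7 + y6*x5^2*t*y4*y9 - y6*x5^2*t*y4*y7 - y6^2*x5*t*y4*x9 + y6^2*x5*t*y4*x7 + y6^2*x5*s*y5*x9 - y6^2*x5*s*y5*x7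 - y6^2*x5*x4*y5*x9 + y6^2*x5*x4*y5*x7 + y6^2*x5^2*y4*x9 - y6^2*x5^2*y4*x7) * h3 +
      (t*x6^2*y4^2*y8 - t*x6^2*y4^2*y7 - t^2*x6*y4^2*y8 + t^2*x6*y4^2*y7 - s*x6^2*y4*y5*y8 + s*x6^2*y4*y5*y7 + s*t*x6*y4*y5*y8 - s*t*x6*y4*y5*y7 - s*t*x6*y4^2*y8 + s*t*x6*y4^2*y7 + s*t^2*y4^2*y8 - s*t^2*y4^2*y7 + s^2*x6*y4*y5*y8 - s^2*x6*y4*y5*y7 - s^2*t*y4*y5*y8 + s^2*t*y4*y5*y7 + x4*x6^2*y4*y5*y8 - x4*x6^2*y4*y5*y7 - x4*t*x6*y4*y5*y8 + x4*t*x6*y4*y5*y7 - x4*s*x6*y4*y5*y8 + x4*s*x6*y4*y5*y7 + x4*s*t*y4*y5*y8 - x4*s*t*y4*y5*y7 - x5*x6^2*y4^2*y8 + x5*x6^2*y4^2*y7 + x5*t*x6*y4^2*y8 - x5*t*x6*y4^2*y7 + x5*s*x6*y4^2*y8 - x5*s*x6*y4^2*y7 - x5*s*t*y4^2*y8 + x5*s*t*y4^2*y7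 - y6*t*x6*y4^2*x8 + y6*t*x6*y4^2*x7 - y6*t^2*y4^2*x7 + y6*s*x6*y4*y5*x8 - y6*s*x6*y4*y5*x7 + y6*s*t*y4*y5*x7 + y6*s*t*y4^2*x8 - y6*s^2*y4*y5*x8 - y6*x4*x6*y4*y5*x8 + y6*x4*x6*y4*y5*x7 - y6*x4*t*y4*y5*x7 - y6*x4*t*x6*y4*y8 + y6*x4*t*x6*y4*y7 + y6*x4*t^2*y4*y8 + y6*x4*s*y4*y5*x8 + y6*x4*s*x6*y5*y8 - y6*x4*s*x6*y5*y7 - y6*x4*s*t*y5*y8 - y6*x4*s*t*y4*y7 + y6*x4*s^2*y5*y7 - y6*x4^2*x6*y5*y8 + y6*x4^2*x6*y5*y7 + y6*x4^2*t*y5*y8 - y6*x4^2*s*y5*y7 + y6*x5*x6*y4^2*x8 - y6*x5*x6*y4^2*x7 + y6*x5*t*y4^2*x7 - y6*x5*s*y4^2*x8 + y6*x5*x4*x6*y4*y8 - y6*x5*x4*x6*y4*y7 - y6*x5*x4*t*y4*y8 + y6*x5*x4*s*y4*y7 + y6^2*x4*t*y4*x8 - y6^2*x4*t*y4*x7 -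 y6^2*x4*s*y5*x8 + y6^2*x4*s*y5*x7 + y6^2*x4^2*y5*x8 - y6^2*x4^2*y5*x7 - y6^2*x5*x4*y4*x8 + y6^2*x5*x4*y4*x7) * h4 +
      (t*x6^2*y4*y5*y9 - t*x6^2*y4*y5*y8 - t^2*x6*y4*y5*y9 + t^2*x6*y4*y5*y8 - s*t*x6*y4*y5*y9 + s*t*x6*y4*y5*y8 + s*t^2*y4*y5*y9 - s*t^2*y4*y5*y8 - x4*x6^2*y5^2*y8 + x4*t*x6*y5^2*y8 + x4*s*x6*y5^2*y8 - x4*s*t*y5^2*y8 + x5*x6^2*y4*y5*y8 - x5*t*x6*y4*y5*y8 - x5*s*x6*y4*y5*y8 + x5*s*t*y4*y5*y8 - y6*t*x6*y4*y5*x9 + y6*t*x6*y4*y5*x8 + y6*t^2*y4*y5*x9 - y6*s*t*y4*y5*x8 + y6*x4*x6*y5^2*x8 - y6*x4*t*x6*y5*y9 - y6*x4*s*y5^2*x8 + y6*x4*s*t*y5*y9 - y6*x5*x6*y4*y5*x8 + y6*x5*t*x6*y4*y8 - y6*x5*t^2*y4*y8 + y6*x5*s*y4*y5*x8 + y6*x5*x4*x6*y5*y8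 - y6*x5*x4*t*y5*y8 - y6*x5^2*x6*y4*y8 + y6*x5^2*t*y4*y8 + y6^2*x4*t*y5*x9 - y6^2*x5*t*y4*x8 - y6^2*x5*x4*y5*x8 + y6^2*x5^2*y4*x8) * h5 +
      (s*x6*y4*y5^2*x7 - s*t*y4*y5^2*x7 + s*t*x6*y4*y5*y7 - s*t*x6*y4^2*y5 - s*t^2*y4*y5*y7 + s*t^2*y4^2*y5 - x4*x6*y4*y5^2*x7 + x4*t*y4*y5^2*x7 + x4*t*x6*y4*y5*y8 - x4*t*x6*y4*y5*y7 - x4*t^2*y4*y5*y8 + x4*t^2*y4*y5*y7 - x4*s*x6*y5^2*y8 + x4*s*t*y5^2*y8 + x4^2*x6*y5^2*y8 - x4^2*t*y5^2*y8 + x5*x6*y4^2*y5*x7 - x5*t*y4^2*y5*x7 - x5*t*x6*y4^2*y8 + x5*t*x6*y4^2*y7 + x5*t^2*y4^2*y8 - x5*t^2*y4^2*y7 + x5*s*x6*y4*y5*y8 - x5*s*x6*y4*y5*y7 - x5*s*t*y4*y5*y8 + x5*s*t*y4*y5*y7 - 2*x5*x4*x6*y4*y5*y8 + x5*x4*x6*y4*y5*y7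 + 2*x5*x4*t*y4*y5*y8 - x5*x4*t*y4*y5*y7 + x5^2*x6*y4^2*y8 - x5^2*x6*y4^2*y7 - x5^2*t*y4^2*y8 + x5^2*t*y4^2*y7 - y6*x4*t*y4*y5*x8 + y6*x4*s*y5^2*x8 - y6*x4*s*y5^2*x7 - y6*x4*s*t*y5*y7 + y6*x4*s*t*y4*y5 - y6*x4^2*y5^2*x8 + y6*x4^2*y5^2*x7 + y6*x4^2*t*y5*y7 + y6*x5*t*y4^2*x8 - y6*x5*s*y4*y5*x8 + 2*y6*x5*x4*y4*y5*x8 - y6*x5*x4*y4*y5*x7 - y6*x5*x4*t*y4*y7 + y6*x5*x4*s*y5*y7 - y6*x5*x4^2*y5*y7 - y6*x5^2*y4^2*x8 + y6*x5^2*x4*y4*y7) * h6 +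
      (s*x6^2*y4*y5*y8 - s*t*x6*y4*y5*y8 - s^2*x6*y4*y5*y8 + s^2*t*y4*y5*y8 - y6*s*x6*y4*y5*x8 + y6*s^2*y4*y5*x8 + y6*s^2*x6*y4*y5 - y6*s^2*t*y4*y5 - y6*x4*s*x6*y4*y5 + y6*x4*s*t*y4*y5 - y6*x5*s*x6*y4*y8 + y6*x5*s*x6*y4^2 + y6*x5*s*t*y4*y8 - y6*x5*s*t*y4^2 - y6^2*x4*s^2*y5 + y6^2*x4^2*s*y5 + y6^2*x5*s*y4*x8 - y6^2*x5*x4*s*y4) * h7 +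
      (-s*t*x6*y4*y5^2 + s*t*x6*y4^2*y5 + s^2*t*y4*y5^2 - s^2*t*y4^2*y5 + x4*s*x6*y4*y5^2 - x4*s^2*y4*y5^2 - x5*s*x6*y4^2*y5 + x5*s^2*y4^2*y5 - y6*x4*s*t*y4*y5 + y6*x4*s^2*y5^2 - y6*x4^2*s*y5^2 + y6*x5*s*t*y4*y5 - y6*x5*s^2*y4*y5 + y6*x5*x4*s*y4*y5) * h8
  exact (mul_eq_zero.mp key).resolve_right
    (mul_ne_zero hD7 (mul_ne_zero hD8 hD9))

set_option maxHeartbeats 1000000 in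
private lemma pappus_core (x1 y1 x2 y2 x3 y3 x4 y4 x5 y5 x6 y6 x7 y7 x8 y8 x9 y9 : ℝ)
    (h12 : x1 ≠ x2 ∨ y1 ≠ y2)
    (h1 : (x2-x1)*(y3-y1)-(x3-x1)*(y2-y1) = 0)
    (h2 : (x5-x4)*(y6-y4)-(x6-x4)*(y5-y4) = 0)
    (h3 : (x4-x1)*(y8-y1)-(x8-x1)*(y4-y1) = 0)
    (h4 : (x5-x1)*(y9-y1)-(x9-x1)*(y5-y1) = 0)
    (h5 : (x4-x2)*(y7-y2)-(x7-x2)*(y4-y2) = 0)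
    (h6 : (x6-x2)*(y9-y2)-(x9-x2)*(y6-y2) = 0)
    (h7 : (x5-x3)*(y7-y3)-(x7-x3)*(y5-y3) = 0)
    (h8 : (x6-x3)*(y8-y3)-(x8-x3)*(y6-y3) = 0)
    (hD7 : (x4-x2)*(y5-y3)-(x5-x3)*(y4-y2) ≠ 0)
    (hD8 : (x4-x1)*(y6-y3)-(x6-x3)*(y4-y1) ≠ 0)
    (hD9 : (x5-x1)*(y6-y2)-(x6-x2)*(y5-y1) ≠ 0) :
    (x8-x7)*(y9-y7)-(x9-x7)*(y8-y7) = 0 := by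
  have hs : ((x2-x1)^2+(y2-y1)^2) ≠ 0 := by
    rcases h12 with h | h
    · have ha : x2 - x1 ≠ 0 := sub_ne_zero.mpr (Ne.symm h)
      have hb : 0 < (x2-x1)^2 := by positivity
      nlinarith [sq_nonneg (y2-y1)]
    · have ha : y2 - y1 ≠ 0 := sub_ne_zero.mpr (Ne.symm h)
      have hb : 0 < (y2-y1)^2 := by positivity
      nlinarith [sq_nonneg (x2-x1)]
  have key := pappus_red ((x2-x1)^2+(y2-y1)^2) ((x2-x1)*(x3-x1)+(y2-y1)*(y3-y1))
      ((x2-x1)*(x4-x1)+(y2-y1)*(y4-y1)) (-(y2-y1)*(x4-x1)+(x2-x1)*(y4-y1)) ((x2-x1)*(x5-x1)+(y2-y1)*(y5-y1)) (-(y2-y1)*(x5-x1)+(x2-x1)*(y5-y1)) ((x2-x1)*(x6-x1)+(y2-y1)*(y6-y1)) (-(y2-y1)*(x6-x1)+(x2-x1)*(y6-y1)) ((x2-x1)*(x7-x1)+(y2-y1)*(y7-y1)) (-(y2-y1)*(x7-x1)+(x2-x1)*(y7-y1)) ((x2-x1)*(x8-x1)+(y2-y1)*(y8-y1)) (-(y2-y1)*(x8-x1)+(x2-x1)*(y8-y1))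 ((x2-x1)*(x9-x1)+(y2-y1)*(y9-y1)) (-(y2-y1)*(x9-x1)+(x2-x1)*(y9-y1))
    (by linear_combination ((x2-x1)^2+(y2-y1)^2)*h2)
    (by linear_combination ((x2-x1)^2+(y2-y1)^2)*h3)
    (by linear_combination ((x2-x1)^2+(y2-y1)^2)*h4)
    (by linear_combination ((x2-x1)^2+(y2-y1)^2)*h5)
    (by linear_combination ((x2-x1)^2+(y2-y1)^2)*h6)
    (by linear_combination ((x2-x1)^2+(y2-y1)^2)*h7 + (((x2-x1)*(x5-x1)+(y2-y1)*(y5-y1)) - ((x2-x1)*(x7-x1)+(y2-y1)*(y7-y1)))*h1)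
    (by linear_combination ((x2-x1)^2+(y2-y1)^2)*h8 + (((x2-x1)*(x6-x1)+(y2-y1)*(y6-y1)) - ((x2-x1)*(x8-x1)+(y2-y1)*(y8-y1)))*h1)
    (fun hc => hD7 (by
      have h0 : ((x2-x1)^2+(y2-y1)^2) * ((x4-x2)*(y5-y3)-(x5-x3)*(y4-y2)) = 0 := by
        linear_combination hc - (((x2-x1)*(x4-x1)+(y2-y1)*(y4-y1)) - ((x2-x1)^2+(y2-y1)^2))*h1
      exact (mul_eq_zero.mp h0).resolve_left hs))
    (fun hc => hD8 (by
      have h0 : ((x2-x1)^2+(y2-y1)^2) * ((x4-x1)*(y6-y3)-(x6-x3)*(y4-y1)) = 0 := by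
        linear_combination hc - ((x2-x1)*(x4-x1)+(y2-y1)*(y4-y1))*h1
      exact (mul_eq_zero.mp h0).resolve_left hs))
    (fun hc => hD9 (by
      have h0 : ((x2-x1)^2+(y2-y1)^2) * ((x5-x1)*(y6-y2)-(x6-x2)*(y5-y1)) = 0 := by
        linear_combination hc
      exact (mul_eq_zero.mp h0).resolve_left hs))
  have key2 : ((x2-x1)^2+(y2-y1)^2) * ((x8-x7)*(y9-y7)-(x9-x7)*(y8-y7)) = 0 := by
    linear_combination key
  exact (mul_eq_zero.mp key2).resolve_left hs

private lemma nz_aux (x2 y2 x3 y3 x4 y4 x5 y5 x7 y7 : ℝ)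
    (h5 : (x4-x2)*(y7-y2)-(x7-x2)*(y4-y2) = 0)
    (h7 : (x5-x3)*(y7-y3)-(x7-x3)*(y5-y3) = 0)
    (hne : x2 ≠ x4 ∨ y2 ≠ y4)
    (h352 : (x5-x3)*(y2-y3)-(x2-x3)*(y5-y3) ≠ 0) :
    (x4-x2)*(y5-y3)-(x5-x3)*(y4-y2) ≠ 0 := by
  intro hD
  apply h352
  have hK : (x7-x2)*(y5-y3)-(x5-x3)*(y7-y2) = 0 := by
    rcases hne with h | h
    · have hx : x4 - x2 ≠ 0 := sub_ne_zero.mpr (Ne.symm h)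
      have h0 : ((x7-x2)*(y5-y3)-(x5-x3)*(y7-y2)) * (x4-x2) = 0 := by
        linear_combination (-(x5-x3))*h5 + (x7-x2)*hD
      exact (mul_eq_zero.mp h0).resolve_right hx
    · have hy : y4 - y2 ≠ 0 := sub_ne_zero.mpr (Ne.symm h)
      have h0 : ((x7-x2)*(y5-y3)-(x5-x3)*(y7-y2)) * (y4-y2) = 0 := by
        linear_combination (-(y5-y3))*h5 + (y7-y2)*hD
      exact (mul_eq_zero.mp h0).resolve_right hy
  linear_combination h7 + hK

private lemma lin_det {L : Set Pt} (hL : IsLine L) {p q r : Pt}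
    (hp : p ∈ L) (hq : q ∈ L) (hr : r ∈ L) :
    (q.1-p.1)*(r.2-p.2)-(r.1-p.1)*(q.2-p.2) = 0 := by
  obtain ⟨a, b, hab, rfl⟩ := hL
  have h : Collinear ℝ ({p, q, r} : Set Pt) :=
    collinear_triple_of_mem_affineSpan_pair hp hq hr
  rw [collinear_iff_of_mem (Set.mem_insert p {q, r})] at h
  obtain ⟨v, hv⟩ := h
  obtain ⟨rq, hrq⟩ := hv q (by simp)
  obtain ⟨rr, hrr⟩ := hv r (by simp)
  rw [hrq, hrr]
  simp only [vadd_eq_add, Prod.fst_add, Prod.snd_add, Prod.smul_fst, Prod.smul_snd,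
    smul_eq_mul]
  ring

private lemma mem_of_det {L : Set Pt} (hL : IsLine L) {p q r : Pt}
    (hp : p ∈ L) (hq : q ∈ L) (hpq : p ≠ q)
    (hd : (q.1-p.1)*(r.2-p.2)-(r.1-p.1)*(q.2-p.2) = 0) : r ∈ L := by
  obtain ⟨a, b, hab, rfl⟩ := hL
  have hcol : Collinear ℝ ({p, q, r} : Set Pt) := by
    rw [collinear_iff_of_mem (Set.mem_insert p {q, r})]
    refine ⟨q - p, fun z hz => ?_⟩
    rcases hz with rfl | hz
    · exact ⟨0, by simp⟩
    rcases hz with rfl | hz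
    · refine ⟨1, ?_⟩
      simp [vadd_eq_add]
    · rw [Set.mem_singleton_iff] at hz
      subst hz
      have hne : q.1 - p.1 ≠ 0 ∨ q.2 - p.2 ≠ 0 := by
        rcases (by rwa [Ne, Prod.ext_iff, not_and_or] at hpq :
            p.1 ≠ q.1 ∨ p.2 ≠ q.2) with h | h
        · exact Or.inl (sub_ne_zero.mpr (Ne.symm h))
        · exact Or.inr (sub_ne_zero.mpr (Ne.symm h))
      rcases hne with hx | hy
      · refine ⟨(z.1-p.1)/(q.1-p.1), Prod.ext ?_ ?_⟩
        · simp only [vadd_eq_add, Prod.fst_add, Prod.smul_fst, smul_eq_mul, Prod.fst_sub]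
          field_simp
          ring
        · simp only [vadd_eq_add, Prod.snd_add, Prod.smul_snd, smul_eq_mul, Prod.snd_sub]
          field_simp
          linear_combination hd
      · refine ⟨(z.2-p.2)/(q.2-p.2), Prod.ext ?_ ?_⟩
        · simp only [vadd_eq_add, Prod.fst_add, Prod.smul_fst, smul_eq_mul, Prod.fst_sub]
          field_simp
          linear_combination -hd
        · simp only [vadd_eq_add, Prod.snd_add, Prod.smul_snd, smul_eq_mul, Prod.snd_sub]
          field_simp
          ring
  have hr' : r ∈ line[ℝ, p, q] :=
    hcol.mem_affineSpan_of_mem_of_ne (Set.mem_insert _ _)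
      (by simp) (by simp) hpq
  have hsub : line[ℝ, p, q] ≤ affineSpan ℝ {a, b} :=
    affineSpan_le.mpr (Set.insert_subset_iff.mpr ⟨hp, Set.singleton_subset_iff.mpr hq⟩)
  exact hsub hr'

theorem stmt16 : ¬ Nonempty (LineRep twoPappus) := by
  rintro ⟨R⟩
  have hV : ∀ v : Fin 18, v ∈ twoPappus.V := fun v => Finset.mem_univ v
  have mem : ∀ (v : Fin 18) (e : Finset (Fin 18)), e ∈ twoPappus.E → v ∈ e →
      R.α v ∈ R.β e := fun v e he hv => (R.incidence v (hV v) e he).mp hv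
  have nmem : ∀ (v : Fin 18) (e : Finset (Fin 18)), e ∈ twoPappus.E → v ∉ e →
      R.α v ∉ R.β e := fun v e he hv hm => hv ((R.incidence v (hV v) e he).mpr hm)
  have inj : ∀ i j : Fin 18, i ≠ j → R.α i ≠ R.α j := fun i j hij h =>
    hij (R.α_inj (Finset.mem_coe.mpr (hV i)) (Finset.mem_coe.mpr (hV j)) h)
  have injc : ∀ i j : Fin 18, i ≠ j → (R.α i).1 ≠ (R.α j).1 ∨ (R.α i).2 ≠ (R.α j).2 := by
    intro i j hij
    have h := inj i j hij
    rwa [Ne, Prod.ext_iff, not_and_or] at h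
  have hEa : ({0, 1, 2} : Finset (Fin 18)) ∈ twoPappus.E := by decide
  have hEb : ({3, 4, 5} : Finset (Fin 18)) ∈ twoPappus.E := by decide
  have hEc : ({0, 3, 7} : Finset (Fin 18)) ∈ twoPappus.E := by decide
  have hEd : ({0, 4, 8} : Finset (Fin 18)) ∈ twoPappus.E := by decide
  have hEe : ({1, 3, 6} : Finset (Fin 18)) ∈ twoPappus.E := by decide
  have hEf : ({1, 5, 8} : Finset (Fin 18)) ∈ twoPappus.E := by decide
  have hEg : ({2, 4, 6} : Finset (Fin 18)) ∈ twoPappus.E := by decide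
  have hEh : ({2, 5, 7} : Finset (Fin 18)) ∈ twoPappus.E := by decide
  have hEi : ({15, 7, 8} : Finset (Fin 18)) ∈ twoPappus.E := by decide
  have h1 := lin_det (R.β_isLine _ hEa) (mem 0 _ hEa (by decide)) (mem 1 _ hEa (by decide))
    (mem 2 _ hEa (by decide))
  have h2 := lin_det (R.β_isLine _ hEb) (mem 3 _ hEb (by decide)) (mem 4 _ hEb (by decide))
    (mem 5 _ hEb (by decide))
  have h3 := lin_det (R.β_isLine _ hEc) (mem 0 _ hEc (by decide)) (mem 3 _ hEc (by decide))
    (mem 7 _ hEc (by decide))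
  have h4 := lin_det (R.β_isLine _ hEd) (mem 0 _ hEd (by decide)) (mem 4 _ hEd (by decide))
    (mem 8 _ hEd (by decide))
  have h5 := lin_det (R.β_isLine _ hEe) (mem 1 _ hEe (by decide)) (mem 3 _ hEe (by decide))
    (mem 6 _ hEe (by decide))
  have h6 := lin_det (R.β_isLine _ hEf) (mem 1 _ hEf (by decide)) (mem 5 _ hEf (by decide))
    (mem 8 _ hEf (by decide))
  have h7 := lin_det (R.β_isLine _ hEg) (mem 2 _ hEg (by decide)) (mem 4 _ hEg (by decide))
    (mem 6 _ hEg (by decide))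
  have h8 := lin_det (R.β_isLine _ hEh) (mem 2 _ hEh (by decide)) (mem 5 _ hEh (by decide))
    (mem 7 _ hEh (by decide))
  have hn7 : ((R.α 4).1-(R.α 2).1)*((R.α 1).2-(R.α 2).2) -
      ((R.α 1).1-(R.α 2).1)*((R.α 4).2-(R.α 2).2) ≠ 0 := fun h =>
    nmem 1 _ hEg (by decide) (mem_of_det (R.β_isLine _ hEg) (mem 2 _ hEg (by decide))
      (mem 4 _ hEg (by decide)) (inj 2 4 (by decide)) h)
  have hn8 : ((R.α 5).1-(R.α 2).1)*((R.α 0).2-(R.α 2).2) -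
      ((R.α 0).1-(R.α 2).1)*((R.α 5).2-(R.α 2).2) ≠ 0 := fun h =>
    nmem 0 _ hEh (by decide) (mem_of_det (R.β_isLine _ hEh) (mem 2 _ hEh (by decide))
      (mem 5 _ hEh (by decide)) (inj 2 5 (by decide)) h)
  have hn9 : ((R.α 5).1-(R.α 1).1)*((R.α 0).2-(R.α 1).2) -
      ((R.α 0).1-(R.α 1).1)*((R.α 5).2-(R.α 1).2) ≠ 0 := fun h =>
    nmem 0 _ hEf (by decide) (mem_of_det (R.β_isLine _ hEf) (mem 1 _ hEf (by decide))
      (mem 5 _ hEf (by decide)) (inj 1 5 (by decide)) h)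
  have hD7 := nz_aux (R.α 1).1 (R.α 1).2 (R.α 2).1 (R.α 2).2 (R.α 3).1 (R.α 3).2
    (R.α 4).1 (R.α 4).2 (R.α 6).1 (R.α 6).2 h5 h7 (injc 1 3 (by decide)) hn7
  have hD8 := nz_aux (R.α 0).1 (R.α 0).2 (R.α 2).1 (R.α 2).2 (R.α 3).1 (R.α 3).2
    (R.α 5).1 (R.α 5).2 (R.α 7).1 (R.α 7).2 h3 h8 (injc 0 3 (by decide)) hn8
  have hD9 := nz_aux (R.α 0).1 (R.α 0).2 (R.α 1).1 (R.α 1).2 (R.α 4).1 (R.α 4).2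
    (R.α 5).1 (R.α 5).2 (R.α 8).1 (R.α 8).2 h4 h6 (injc 0 4 (by decide)) hn9
  have hmain := pappus_core (R.α 0).1 (R.α 0).2 (R.α 1).1 (R.α 1).2 (R.α 2).1 (R.α 2).2
    (R.α 3).1 (R.α 3).2 (R.α 4).1 (R.α 4).2 (R.α 5).1 (R.α 5).2 (R.α 6).1 (R.α 6).2
    (R.α 7).1 (R.α 7).2 (R.α 8).1 (R.α 8).2 (injc 0 1 (by decide))
    h1 h2 h3 h4 h5 h6 h7 h8 hD7 hD8 hD9
  have hcyc : ((R.α 8).1-(R.α 7).1)*((R.α 6).2-(R.α 7).2) -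
      ((R.α 6).1-(R.α 7).1)*((R.α 8).2-(R.α 7).2) = 0 := by linear_combination hmain
  have hfin : R.α 6 ∈ R.β {15, 7, 8} :=
    mem_of_det (R.β_isLine _ hEi) (mem 7 _ hEi (by decide)) (mem 8 _ hEi (by decide))
      (inj 7 8 (by decide)) hcyc
  exact nmem 6 _ hEi (by decide) hfin
end
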